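/- b(R_ω) = add(M) and d(R_ω) = cof(M), where M is the meager ideal on 2^ω (equivalently on ω^ω). -/

import Mathlib

open Cardinal Set Filter

/-- A relational system `⟨X, Y, R⟩`. -/
structure RelSys : Type 1 where
  X : Type
  Y : Type
  R : X → Y → Prop

/-- The bounding number `𝔟(A)` of a relational system. -/
noncomputable def bnum (A : RelSys) : Cardinal :=
  sInf {c | ∃ F : Set A.X, c = #↥F ∧ ∀ y, ∃ x ∈ F, ¬ A.R x y}

/-- The dominating number `𝔡(A)` of a relational system. -/
noncomputable def dnum (A : RelSys) : Cardinal :=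
  sInf {c | ∃ D : Set A.Y, c = #↥D ∧ ∀ x, ∃ y ∈ D, A.R x y}

/-- An interval partition of `ω`, with `I_n = [e n, e (n+1))`. -/
structure IntPart : Type where
  e : ℕ → ℕ
  zero : e 0 = 0
  mono : StrictMono e

/-- `f ⊏• (I, h)`. -/
def sqb (I : IntPart) (f h : ℕ → ℕ) : Prop :=
  ∀ᶠ n in atTop, ∃ k, I.e n ≤ k ∧ k < I.e (n + 1) ∧ f k = h k

/-- The relational system `R_ω = ⟨ω^ω, 𝕀 × ω^ω, ⊏•⟩`. -/
def Romega : RelSys := ⟨ℕ → ℕ, IntPart × (ℕ → ℕ), fun f p => sqb p.1 f p.2⟩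

/-- The meager ideal on the Baire space `ω^ω`. -/
def MIdeal : Set (Set (ℕ → ℕ)) := {A | IsMeagre A}

/-- The additivity number of a family of sets. -/
noncomputable def addIdeal {α : Type*} (I : Set (Set α)) : Cardinal :=
  sInf {c | ∃ F : Set (Set α), F ⊆ I ∧ c = #↥F ∧ ⋃₀ F ∉ I}

/-- The cofinality number of a family of sets. -/
noncomputable def cofIdeal {α : Type*} (I : Set (Set α)) : Cardinal :=
  sInf {c | ∃ F : Set (Set α), F ⊆ I ∧ c = #↥F ∧ ∀ A ∈ I, ∃ B ∈ F, A ⊆ B}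
namespace RW

abbrev XX := ℕ → ℕ

/-- cylinder of all y agreeing with s below L -/
def Cyl (L : ℕ) (s : XX) : Set XX := {y | ∀ i < L, y i = s i}

lemma self_mem_Cyl (L : ℕ) (s : XX) : s ∈ Cyl L s := fun _ _ => rfl

lemma Cyl_mono {L L' : ℕ} (h : L ≤ L') (s : XX) : Cyl L' s ⊆ Cyl L s :=
  fun _ hy i hi => hy i (lt_of_lt_of_le hi h)

lemma Cyl_sub_of_extend {L L' : ℕ} {s s' : XX} (h : L ≤ L') (hag : ∀ i < L, s' i = s i) :
    Cyl L' s' ⊆ Cyl L s := fun y hy i hi => by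
  rw [hy i (lt_of_lt_of_le hi h), hag i hi]

lemma Cyl_congr {L : ℕ} {s t : XX} (h : ∀ i < L, s i = t i) : Cyl L s = Cyl L t := by
  ext y; constructor <;> intro hy i hi
  · rw [hy i hi]; exact h i hi
  · rw [hy i hi, h i hi]

lemma isOpen_Cyl (L : ℕ) (s : XX) : IsOpen (Cyl L s) := by
  have : Cyl L s = ⋂ i ∈ Finset.range L, (fun y : XX => y i) ⁻¹' {s i} := by
    ext y; simp [Cyl, Set.mem_iInter]
  rw [this]
  exact isOpen_biInter_finset fun i _ => (continuous_apply i).isOpen_preimage _ (isOpen_discrete _)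

lemma isClosed_Cyl (L : ℕ) (s : XX) : IsClosed (Cyl L s) := by
  have : Cyl L s = ⋂ i ∈ Finset.range L, (fun y : XX => y i) ⁻¹' {s i} := by
    ext y; simp [Cyl, Set.mem_iInter]
  rw [this]
  exact isClosed_biInter fun i _ => (IsClosed.preimage (continuous_apply i) (isClosed_discrete _))

/-- basic nbhd extraction -/
lemma exists_cyl_subset {U : Set XX} (hU : IsOpen U) {y : XX} (hy : y ∈ U) :
    ∃ L, Cyl L y ⊆ U := by
  rw [isOpen_pi_iff] at hU
  obtain ⟨I, u, hu, hsub⟩ := hU y hy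
  rcases I.eq_empty_or_nonempty with h | h
  · exact ⟨0, fun z _ => hsub (by simp [h, Set.pi])⟩
  · refine ⟨I.max' h + 1, fun z hz => hsub ?_⟩
    intro i hi
    have : z i = y i := hz i (Nat.lt_succ_of_le (I.le_max' i hi))
    rw [this]; exact (hu i hi).2

/-- combinatorial nowhere density criterion -/
lemma isNowhereDense_of_escape {C : Set XX}
    (h : ∀ (L : ℕ) (s : XX), ∃ L' s', L ≤ L' ∧ (∀ i < L, s' i = s i) ∧ Cyl L' s' ∩ C = ∅) :
    IsNowhereDense C := by
  rw [IsNowhereDense]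
  by_contra hne
  obtain ⟨y, hy⟩ := Set.nonempty_iff_ne_empty.2 hne
  obtain ⟨L, hL⟩ := exists_cyl_subset isOpen_interior hy
  obtain ⟨L', s', hLL, hagree, hdisj⟩ := h L y
  have hmem : s' ∈ Cyl L y := fun i hi => hagree i hi
  have hs'cl : s' ∈ closure C := interior_subset (hL hmem)
  rw [mem_closure_iff] at hs'cl
  obtain ⟨z, hz1, hz2⟩ := hs'cl (Cyl L' s') (isOpen_Cyl _ _) (self_mem_Cyl _ _)
  have : z ∈ Cyl L' s' ∩ C := ⟨hz1, hz2⟩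
  rw [hdisj] at this
  exact this

/-- escape from a closed nowhere dense set -/
lemma escape_of_closed_nwd {C : Set XX} (hC : IsClosed C) (hN : IsNowhereDense C) :
    ∀ (L : ℕ) (s : XX), ∃ L' s', L ≤ L' ∧ (∀ i < L, s' i = s i) ∧ Cyl L' s' ∩ C = ∅ := by
  intro L s
  have hCc : closure C = C := hC.closure_eq
  have : ¬ (Cyl L s ⊆ C) := by
    intro hsub
    have : Cyl L s ⊆ interior (closure C) := by
      rw [hCc]
      exact (isOpen_Cyl L s).subset_interior_iff.mpr hsub
    have := this (self_mem_Cyl L s)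
    rw [hN] at this; exact this
  obtain ⟨z, hz, hzC⟩ := Set.not_subset.1 this
  obtain ⟨L2, hL2⟩ := exists_cyl_subset (hC.isOpen_compl) (by exact hzC)
  refine ⟨max L L2, z, le_max_left _ _, fun i hi => hz i hi, ?_⟩
  apply Set.eq_empty_of_forall_notMem
  intro w hw
  exact hL2 (Cyl_mono (le_max_right _ _) z hw.1) hw.2

/-- extraction of a monotone closed nwd cover from meagreness -/
lemma meagre_cover {B : Set XX} (hB : IsMeagre B) :
    ∃ F : ℕ → Set XX, Monotone F ∧ (∀ n, IsClosed (F n) ∧ IsNowhereDense (F n)) ∧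
      B ⊆ ⋃ n, F n := by
  rw [isMeagre_iff_countable_union_isNowhereDense] at hB
  obtain ⟨S, hnwd, hcnt, hsub⟩ := hB
  rcases S.eq_empty_or_nonempty with h | h
  · exact ⟨fun _ => ∅, monotone_const, fun _ => ⟨isClosed_empty, isNowhereDense_empty⟩,
      by simpa [h] using hsub⟩
  obtain ⟨f, hf⟩ := (Set.countable_iff_exists_surjective h).1 hcnt
  refine ⟨fun n => ⋃ i ∈ Finset.range (n+1), closure (f i : Set XX), ?_, ?_, ?_⟩
  · intro a b hab y hy
    simp only [Set.mem_iUnion, Finset.mem_range] at hy ⊢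
    obtain ⟨i, hi, hyi⟩ := hy
    exact ⟨i, by omega, hyi⟩
  · intro n
    constructor
    · exact isClosed_biUnion_finset fun i _ => isClosed_closure
    · -- finite union of nwd is nwd
      apply isNowhereDense_of_escape
      intro L s
      have key : ∀ (l : List ℕ) (L0 : ℕ) (s0 : XX), ∃ L' s', L0 ≤ L' ∧
          (∀ i < L0, s' i = s0 i) ∧ ∀ j ∈ l, Cyl L' s' ∩ closure (f j : Set XX) = ∅ := by
        intro l
        induction l with
        | nil => exact fun L0 s0 => ⟨L0, s0, le_refl _, fun _ _ => rfl, by simp⟩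
        | cons a t ih =>
          intro L0 s0
          obtain ⟨L1, s1, h01, hag1, hdis1⟩ := ih L0 s0
          obtain ⟨L2, s2, h12, hag2, hdis2⟩ :=
            escape_of_closed_nwd isClosed_closure ((hnwd _ (f a).2).closure) L1 s1
          refine ⟨L2, s2, le_trans h01 h12, fun i hi => by
            rw [hag2 i (lt_of_lt_of_le hi h01)]; exact hag1 i hi, ?_⟩
          intro j hj
          rcases List.mem_cons.1 hj with rfl | hj
          · exact hdis2
          · apply Set.eq_empty_of_subset_empty
            rw [← hdis1 j hj]
            exact Set.inter_subset_inter_left _ (Cyl_sub_of_extend h12 hag2)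
      obtain ⟨L', s', hle, hag, hdis⟩ := key (List.range (n+1)) L s
      refine ⟨L', s', hle, hag, ?_⟩
      apply Set.eq_empty_of_forall_notMem
      rintro y ⟨hy1, hy2⟩
      simp only [Set.mem_iUnion] at hy2
      obtain ⟨i, hi, hyi⟩ := hy2
      have : y ∈ Cyl L' s' ∩ closure (f i : Set XX) := ⟨hy1, hyi⟩
      rw [hdis i (by simpa using hi)] at this
      exact this
  · intro y hy
    obtain ⟨t, ht, hyt⟩ := hsub hy
    obtain ⟨i, hfi⟩ := hf ⟨t, ht⟩
    have hval : (f i : Set XX) = t := congrArg Subtype.val hfi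
    refine Set.mem_iUnion.2 ⟨i, Set.mem_biUnion (Finset.self_mem_range_succ i) ?_⟩
    rw [hval]; exact subset_closure hyt

/-- producing meagreness from countably many nwd sets -/
lemma isMeagre_of_cover {B : Set XX} (F : ℕ → Set XX) (hF : ∀ n, IsNowhereDense (F n))
    (hsub : B ⊆ ⋃ n, F n) : IsMeagre B := by
  rw [isMeagre_iff_countable_union_isNowhereDense]
  exact ⟨Set.range F, by rintro t ⟨n, rfl⟩; exact hF n, Set.countable_range F,
    hsub.trans (by rw [Set.sUnion_range])⟩

end RW
namespace RW

/-! ## The bounded world -/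

def PS (G : XX) : Set XX := {y | ∀ k, y k ≤ G k}

def BddStr (G : XX) (L : ℕ) (s : XX) : Prop := ∀ i < L, s i ≤ G i

def PCyl (G : XX) (L : ℕ) (s : XX) : Set XX := PS G ∩ Cyl L s

def NwdP (G : XX) (C : Set XX) : Prop :=
  ∀ (L : ℕ) (s : XX), BddStr G L s →
    ∃ L' s', L ≤ L' ∧ (∀ i < L, s' i = s i) ∧ BddStr G L' s' ∧ PCyl G L' s' ∩ C = ∅

def MeagreP (G : XX) (S : Set XX) : Prop :=
  ∃ F : ℕ → Set XX, Monotone F ∧ (∀ n, NwdP G (F n)) ∧ S ∩ PS G ⊆ ⋃ n, F n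

def squash (G y : XX) : XX := fun k => min (y k) (G k)

lemma squash_mem_PS (G y : XX) : squash G y ∈ PS G := fun k => min_le_right _ _

lemma squash_eq_self {G p : XX} (hp : p ∈ PS G) : squash G p = p := by
  funext k; exact min_eq_left (hp k)

lemma NwdP_mono {G : XX} {C D : Set XX} (h : NwdP G C) (hDC : D ⊆ C) : NwdP G D := by
  intro L s hs
  obtain ⟨L', s', h1, h2, h3, h4⟩ := h L s hs
  exact ⟨L', s', h1, h2, h3, Set.eq_empty_of_subset_empty (h4 ▸ Set.inter_subset_inter_right _ hDC)⟩

lemma NwdP_union {G : XX} {C D : Set XX} (hC : NwdP G C) (hD : NwdP G D) :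
    NwdP G (C ∪ D) := by
  intro L s hs
  obtain ⟨L1, s1, h1, h2, h3, h4⟩ := hC L s hs
  obtain ⟨L2, s2, g1, g2, g3, g4⟩ := hD L1 s1 h3
  refine ⟨L2, s2, le_trans h1 g1, fun i hi => by rw [g2 i (lt_of_lt_of_le hi h1)]; exact h2 i hi,
    g3, ?_⟩
  apply Set.eq_empty_of_forall_notMem
  rintro y ⟨⟨hy1, hy2⟩, hy3 | hy3⟩
  · have : y ∈ PCyl G L1 s1 ∩ C :=
      ⟨⟨hy1, Cyl_sub_of_extend g1 g2 hy2⟩, hy3⟩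
    rw [h4] at this; exact this
  · have : y ∈ PCyl G L2 s2 ∩ D := ⟨⟨hy1, hy2⟩, hy3⟩
    rw [g4] at this; exact this

/-- preimages under squash of bounded-meagre sets are meagre -/
lemma isMeagre_squash_preimage {G : XX} {S : Set XX} (h : MeagreP G S) :
    IsMeagre {y : XX | squash G y ∈ S} := by
  obtain ⟨F, hmono, hnwd, hsub⟩ := h
  apply isMeagre_of_cover (fun n => {y : XX | squash G y ∈ F n})
  · intro n
    apply isNowhereDense_of_escape
    intro L s
    obtain ⟨L', s', h1, h2, h3, h4⟩ := hnwd n L (squash G s) (fun i _ => min_le_right _ _)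
    refine ⟨L', fun i => if i < L then s i else s' i, h1, fun i hi => by simp [hi], ?_⟩
    apply Set.eq_empty_of_forall_notMem
    rintro y ⟨hy1, hy2⟩
    have : squash G y ∈ PCyl G L' s' ∩ F n := by
      refine ⟨⟨squash_mem_PS G y, fun i hi => ?_⟩, hy2⟩
      by_cases hiL : i < L
      · have : y i = s i := by have := hy1 i hi; simpa [hiL] using this
        rw [show squash G y i = min (y i) (G i) from rfl, this]
        exact (h2 i hiL).symm
      · have hyi : y i = s' i := by have := hy1 i hi; simpa [hiL] using this
        have : s' i ≤ G i := h3 i hi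
        simp [squash, hyi, this]
    rw [h4] at this; exact this
  · intro y hy
    have : squash G y ∈ S ∩ PS G := ⟨hy, squash_mem_PS G y⟩
    obtain ⟨n, hn⟩ := Set.mem_iUnion.1 (hsub this)
    exact Set.mem_iUnion.2 ⟨n, hn⟩

def merge (a : ℕ) (s t : XX) : XX := fun i => if i < a then s i else t i

/-- simultaneous escape for a list of prefixes -/
lemma multi_escape {G : XX} {C : Set XX} (hC : NwdP G C) (a : ℕ) (l : List XX)
    (hl : ∀ s ∈ l, BddStr G a s) :
    ∃ b t, a ≤ b ∧ BddStr G b t ∧ ∀ s ∈ l, PCyl G b (merge a s t) ∩ C = ∅ := by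
  induction l with
  | nil => exact ⟨a, fun _ => 0, le_refl _, fun i _ => Nat.zero_le _, by simp⟩
  | cons s l ih =>
    obtain ⟨b, t, hab, hbt, hdis⟩ := ih (fun u hu => hl u (List.mem_cons_of_mem _ hu))
    have hbdd : BddStr G b (merge a s t) := by
      intro i hi
      by_cases hia : i < a
      · simpa [merge, hia] using hl s List.mem_cons_self i hia
      · simpa [merge, hia] using hbt i hi
    obtain ⟨b', s2, hbb', hag, hbs2, hdis2⟩ := hC b (merge a s t) hbdd
    refine ⟨b', s2, le_trans hab hbb', hbs2, ?_⟩
    intro u hu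
    rcases List.mem_cons.1 hu with rfl | hu
    · have : Cyl b' (merge a u s2) = Cyl b' s2 := by
        apply Cyl_congr
        intro i _
        by_cases hia : i < a
        · have h1 : s2 i = merge a u t i := hag i (lt_of_lt_of_le hia hab)
          simp only [merge, if_pos hia] at h1 ⊢
          exact h1.symm
        · simp [merge, hia]
      rw [PCyl, this, ← PCyl]; exact hdis2
    · apply Set.eq_empty_of_forall_notMem
      rintro y ⟨⟨hy1, hy2⟩, hy3⟩
      have hyb : y ∈ Cyl b (merge a u t) := by
        intro i hi
        have := hy2 i (lt_of_lt_of_le hi hbb')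
        rw [this]
        by_cases hia : i < a
        · simp [merge, hia]
        · rw [merge, if_neg hia, merge, if_neg hia, hag i hi, merge, if_neg hia]
      have : y ∈ PCyl G b (merge a u t) ∩ C := ⟨⟨hy1, hyb⟩, hy3⟩
      rw [hdis u hu] at this; exact this

/-- enumeration of bounded strings -/
lemma exists_bdd_list (G : XX) (a : ℕ) :
    ∃ l : List XX, (∀ s ∈ l, BddStr G a s) ∧
      ∀ y ∈ PS G, ∃ s ∈ l, ∀ i < a, y i = s i := by
  induction a with
  | zero => exact ⟨[fun _ => 0], by intro s hs i hi; omega, fun y _ => ⟨fun _ => 0, by simp, by omega⟩⟩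
  | succ a ih =>
    obtain ⟨l, hbdd, hcov⟩ := ih
    refine ⟨(List.range (G a + 1)).flatMap (fun v => l.map (fun s => Function.update s a v)),
      ?_, ?_⟩
    · intro s hs i hi
      simp only [List.mem_flatMap, List.mem_map, List.mem_range] at hs
      obtain ⟨v, hv, u, hu, rfl⟩ := hs
      rcases Nat.lt_succ_iff_lt_or_eq.1 hi with hia | rfl
      · rw [Function.update_of_ne (by omega)]
        exact hbdd u hu i hia
      · rw [Function.update_self]; omega
    · intro y hy
      obtain ⟨s, hsl, hsag⟩ := hcov y hy
      refine ⟨Function.update s a (y a), ?_, ?_⟩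
      · simp only [List.mem_flatMap, List.mem_map, List.mem_range]
        exact ⟨y a, by have := hy a; omega, s, hsl, rfl⟩
      · intro i hi
        rcases Nat.lt_succ_iff_lt_or_eq.1 hi with hia | rfl
        · rw [Function.update_of_ne (by omega)]; exact hsag i hia
        · rw [Function.update_self]

/-- single-stage construction step for the characterization -/
lemma char_step {G : XX} {C : Set XX} (hC : NwdP G C) (a : ℕ) (x0 : XX)
    (hx0 : ∀ i, x0 i ≤ G i) :
    ∃ (b : ℕ) (x1 : XX), a < b ∧ (∀ i < a, x1 i = x0 i) ∧ (∀ i, x1 i ≤ G i) ∧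
      ∀ y ∈ PS G, (∀ i, a ≤ i → i < b → y i = x1 i) → y ∉ C := by
  obtain ⟨l, hbdd, hcov⟩ := exists_bdd_list G a
  obtain ⟨b, t, hab, hbt, hdis⟩ := multi_escape hC a l hbdd
  refine ⟨b + 1, fun i => if i < a then x0 i else if i < b then t i else 0, by omega,
    fun i hi => by simp only [if_pos hi], ?_, ?_⟩
  · intro i
    by_cases h1 : i < a
    · simp only [if_pos h1]; exact hx0 i
    · by_cases h2 : i < b
      · simp only [if_neg h1, if_pos h2]; exact hbt i h2
      · simp only [if_neg h1, if_neg h2]; exact Nat.zero_le _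
  · intro y hy hag hyC
    obtain ⟨s, hsl, hsag⟩ := hcov y hy
    have : y ∈ PCyl G b (merge a s t) ∩ C := by
      refine ⟨⟨hy, fun i hi => ?_⟩, hyC⟩
      by_cases hia : i < a
      · rw [merge, if_pos hia]; exact hsag i hia
      · rw [merge, if_neg hia]
        have := hag i (by omega) (by omega)
        simpa [hia, hi] using this
    rw [hdis s hsl] at this; exact this

/-- THE characterization of meagre sets in a bounded product -/
lemma charP {G : XX} {S : Set XX} (h : MeagreP G S) :
    ∃ (J : IntPart) (x : XX), x ∈ PS G ∧
      ∀ y ∈ S ∩ PS G, ∀ᶠ n in atTop, ∃ i, J.e n ≤ i ∧ i < J.e (n + 1) ∧ y i ≠ x i := by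
  obtain ⟨F, hmono, hnwd, hsub⟩ := h
  -- iterate char_step
  have step : ∀ (n : ℕ) (p : ℕ × XX), (∀ i, p.2 i ≤ G i) →
      ∃ q : ℕ × XX, p.1 < q.1 ∧ (∀ i < p.1, q.2 i = p.2 i) ∧ (∀ i, q.2 i ≤ G i) ∧
        ∀ y ∈ PS G, (∀ i, p.1 ≤ i → i < q.1 → y i = q.2 i) → y ∉ F n := by
    intro n p hp
    obtain ⟨b, x1, h1, h2, h3, h4⟩ := char_step (hnwd n) p.1 p.2 hp
    exact ⟨(b, x1), h1, h2, h3, h4⟩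
  classical
  -- the recursively defined sequence of states
  let st : ℕ → ℕ × XX := fun n => Nat.rec ((0 : ℕ), fun _ => (0 : ℕ)) (fun n p =>
    if hp : (∀ i, p.2 i ≤ G i) then Classical.choose (step n p hp) else p) n
  have hst0 : st 0 = (0, fun _ => 0) := rfl
  have hbdd : ∀ n, ∀ i, (st n).2 i ≤ G i := by
    intro n
    induction n with
    | zero => intro i; exact Nat.zero_le _
    | succ n ih =>
      intro i
      show (if hp : (∀ i, (st n).2 i ≤ G i) then Classical.choose (step n (st n) hp)
        else (st n)).2 i ≤ G i
      rw [dif_pos ih]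
      exact (Classical.choose_spec (step n (st n) ih)).2.2.1 i
  have hsucc : ∀ n, st (n+1) = Classical.choose (step n (st n) (hbdd n)) := by
    intro n
    show (if hp : _ then _ else _) = _
    rw [dif_pos (hbdd n)]
  have hlt : ∀ n, (st n).1 < (st (n+1)).1 := by
    intro n; rw [hsucc n]
    exact (Classical.choose_spec (step n (st n) (hbdd n))).1
  have hag : ∀ n, ∀ i < (st n).1, (st (n+1)).2 i = (st n).2 i := by
    intro n; rw [hsucc n]
    exact (Classical.choose_spec (step n (st n) (hbdd n))).2.1
  have hkill : ∀ n, ∀ y ∈ PS G,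
      (∀ i, (st n).1 ≤ i → i < (st (n+1)).1 → y i = (st (n+1)).2 i) → y ∉ F n := by
    intro n; rw [hsucc n]
    exact (Classical.choose_spec (step n (st n) (hbdd n))).2.2.2
  have hamono : Monotone (fun n => (st n).1) :=
    monotone_nat_of_le_succ (fun n => le_of_lt (hlt n))
  have hstab : ∀ n m, n ≤ m → ∀ i < (st n).1, (st m).2 i = (st n).2 i := by
    intro n m hnm
    induction m with
    | zero =>
      intro i hi
      have h0 : n = 0 := Nat.le_zero.1 hnm
      rw [h0]
    | succ m ih =>
      intro i hi
      rcases Nat.lt_succ_iff_lt_or_eq.1 (Nat.lt_succ_of_le hnm) with h' | rfl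
      · have h'' : n ≤ m := by omega
        rw [hag m i (lt_of_lt_of_le hi (hamono h''))]
        exact ih h'' i hi
      · rfl
  have hgrow : ∀ n, n ≤ (st n).1 := by
    intro n
    induction n with
    | zero => exact Nat.zero_le _
    | succ n ih => have := hlt n; omega
  have hxval : ∀ n, ∀ i < (st (n+1)).1, (fun i => (st (i+1)).2 i) i = (st (n+1)).2 i := by
    intro n i hi
    have hii : i < (st (i+1)).1 := lt_of_lt_of_le (Nat.lt_succ_self i) (hgrow (i+1))
    rcases le_total (i+1) (n+1) with h | h
    · exact (hstab (i+1) (n+1) h i hii).symm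
    · exact hstab (n+1) (i+1) h i hi
  refine ⟨⟨fun n => (st n).1, rfl, strictMono_nat_of_lt_succ hlt⟩,
    fun i => (st (i+1)).2 i, ?_, ?_⟩
  · intro i; exact hbdd (i+1) i
  · rintro y ⟨hyS, hyP⟩
    obtain ⟨N, hN⟩ := Set.mem_iUnion.1 (hsub ⟨hyS, hyP⟩)
    rw [Filter.eventually_atTop]
    refine ⟨N, fun n hn => ?_⟩
    by_contra hcon
    push_neg at hcon
    apply hkill n y hyP
    · intro i h1 h2
      rw [← hxval n i h2]
      exact hcon i h1 h2
    · exact hmono hn hN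

end RW
namespace RW

/-! ## canonical projections of ambient meagre sets -/

def pre (G : XX) (p : XX) : Set XX := {y | squash G y = p}

def canonical (G : XX) (B : Set XX) : Set XX := {p | p ∈ PS G ∧ pre G p ⊆ B}

def CanPiece (G : XX) (Fm : Set XX) (L : ℕ) (u : XX) : Set XX :=
  {p | (∀ i < L, min (u i) (G i) = p i) ∧
    ∀ y, squash G y = p → (∀ i < L, y i = u i) → y ∈ Fm}

lemma nwdP_CanPiece {G : XX} {Fm : Set XX} (hcl : IsClosed Fm) (hnwd : IsNowhereDense Fm)
    (L : ℕ) (u : XX) : NwdP G (CanPiece G Fm L u) := by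
  intro ℓ v hv
  by_cases hbad : ∃ i, i < L ∧ i < ℓ ∧ min (u i) (G i) ≠ v i
  · obtain ⟨i, hi1, hi2, hi3⟩ := hbad
    refine ⟨ℓ, v, le_refl _, fun _ _ => rfl, hv, ?_⟩
    apply Set.eq_empty_of_forall_notMem
    rintro p ⟨⟨_, hp2⟩, hp3, _⟩
    exact hi3 ((hp3 i hi1).trans (hp2 i hi2))
  push_neg at hbad
  set M := max L ℓ with hM
  set w : XX := fun i => if i < L then u i else if i < ℓ then v i else G i with hw
  obtain ⟨Lw, w', hMLw, hagw, hdisw⟩ := escape_of_closed_nwd hcl hnwd M w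
  refine ⟨max Lw M, fun i => if i < ℓ then v i else min (w' i) (G i), le_trans (le_max_right L ℓ) (le_max_right Lw M),
    fun i hi => by simp only [if_pos hi], ?_, ?_⟩
  · intro i _
    by_cases hiℓ : i < ℓ
    · simp only [if_pos hiℓ]; exact hv i hiℓ
    · simp only [if_neg hiℓ]; exact min_le_right _ _
  · apply Set.eq_empty_of_forall_notMem
    rintro p ⟨⟨hpPS, hpC⟩, hp1, hp2⟩
    -- build the witness escaping Fm
    set y : XX := fun i => if i < Lw then w' i else p i with hy
    have hsq : squash G y = p := by
      funext i
      show min (y i) (G i) = p i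
      by_cases hiw : i < Lw
      · have hpv : p i = (fun i => if i < ℓ then v i else min (w' i) (G i)) i :=
          hpC i (lt_of_lt_of_le hiw (le_max_left _ _))
        simp only [hy, if_pos hiw]
        by_cases hiℓ : i < ℓ
        · rw [hpv]
          simp only [if_pos hiℓ]
          have hiM : i < M := lt_of_lt_of_le hiℓ (le_max_right _ _)
          rw [hagw i hiM]
          by_cases hiL : i < L
          · simp only [hw, if_pos hiL]; exact hbad i hiL hiℓ
          · simp only [hw, if_neg hiL, if_pos hiℓ]
            exact min_eq_left (hv i hiℓ)
        · rw [hpv]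
          simp only [if_neg hiℓ]
      · simp only [hy, if_neg hiw]
        exact min_eq_left (hpPS i)
    have hyu : ∀ i < L, y i = u i := by
      intro i hiL
      have hiM : i < M := lt_of_lt_of_le hiL (le_max_left _ _)
      have hiw : i < Lw := lt_of_lt_of_le hiM hMLw
      simp only [hy, if_pos hiw]
      rw [hagw i hiM]
      simp only [hw, if_pos hiL]
    have hyF : y ∈ Fm := hp2 y hsq hyu
    have : y ∈ Cyl Lw w' ∩ Fm := ⟨fun i hi => by simp only [hy, if_pos hi], hyF⟩
    rw [hdisw] at this; exact this

lemma canonical_meagreP {G : XX} {B : Set XX} (hB : IsMeagre B) :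
    MeagreP G (canonical G B) := by
  classical
  obtain ⟨F, hmono, hcn, hsub⟩ := meagre_cover hB
  -- countable indexing of the pieces
  let dec : ℕ → ℕ × ℕ × List ℕ := fun n => Denumerable.ofNat (ℕ × ℕ × List ℕ) n
  let piece : ℕ → Set XX := fun n =>
    CanPiece G (F (dec n).1) (dec n).2.1 (fun i => ((dec n).2.2).getD i 0)
  let Fp : ℕ → Set XX := fun n => Nat.rec (piece 0) (fun n Q => Q ∪ piece (n+1)) n
  have hFpsucc : ∀ n, Fp (n+1) = Fp n ∪ piece (n+1) := fun n => rfl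
  have hFpmono : Monotone Fp := by
    apply monotone_nat_of_le_succ
    intro n
    rw [hFpsucc]
    exact Set.subset_union_left
  have hFpnwd : ∀ n, NwdP G (Fp n) := by
    intro n
    induction n with
    | zero => exact nwdP_CanPiece (hcn _).1 (hcn _).2 _ _
    | succ n ih => rw [hFpsucc]; exact NwdP_union ih (nwdP_CanPiece (hcn _).1 (hcn _).2 _ _)
  have hpiece_sub : ∀ n, piece n ⊆ Fp n := by
    intro n
    cases n with
    | zero => exact le_refl _
    | succ n => rw [hFpsucc]; exact Set.subset_union_right
  refine ⟨Fp, hFpmono, hFpnwd, ?_⟩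
  rintro p ⟨⟨hpPS, hpre⟩, -⟩
  -- fiber Baire argument
  by_contra hcon
  rw [Set.mem_iUnion] at hcon
  push_neg at hcon
  have hnopiece : ∀ (m L : ℕ) (l : List ℕ), p ∉ CanPiece G (F m) L (fun i => l.getD i 0) := by
    intro m L l
    have h1 := hcon (Encodable.encode (m, L, l))
    intro hmem
    apply h1
    apply hpiece_sub
    show p ∈ CanPiece G (F (dec _).1) _ _
    have : dec (Encodable.encode (m, L, l)) = (m, L, l) := Denumerable.ofNat_encode _
    rw [this]
    exact hmem
  -- step: extend a witness
  have step : ∀ (m : ℕ) (q : ℕ × XX), squash G q.2 = p →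
      ∃ r : ℕ × XX, q.1 < r.1 ∧ (∀ i < q.1, r.2 i = q.2 i) ∧ squash G r.2 = p ∧
        Cyl r.1 r.2 ∩ F m = ∅ := by
    intro m q hq
    have := hnopiece m q.1 ((List.range q.1).map q.2)
    rw [CanPiece] at this
    simp only [Set.mem_setOf_eq, not_and] at this
    have hcompat : ∀ i < q.1, min (((List.range q.1).map q.2).getD i 0) (G i) = p i := by
      intro i hi
      have : ((List.range q.1).map q.2).getD i 0 = q.2 i := by
        rw [List.getD_eq_getElem?_getD]
        simp [List.getElem?_map, List.getElem?_range, hi]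
      rw [this, ← hq]
      rfl
    have hex := this hcompat
    push_neg at hex
    obtain ⟨y, hy1, hy2, hy3⟩ := hex
    obtain ⟨L2, hL2⟩ := exists_cyl_subset (hcn m).1.isOpen_compl hy3
    refine ⟨(max L2 (q.1+1), y), lt_of_lt_of_le (Nat.lt_succ_self _) (le_max_right _ _), ?_, hy1, ?_⟩
    · intro i hi
      have : ((List.range q.1).map q.2).getD i 0 = q.2 i := by
        rw [List.getD_eq_getElem?_getD]
        simp [List.getElem?_map, List.getElem?_range, hi]
      rw [← this]
      exact hy2 i hi
    · apply Set.eq_empty_of_forall_notMem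
      rintro z ⟨hz1, hz2⟩
      exact hL2 (Cyl_sub_of_extend (le_max_left _ _) (fun _ _ => rfl) hz1) hz2
  -- iterate
  let st : ℕ → ℕ × XX := fun n => Nat.rec ((0 : ℕ), p) (fun n q =>
    if hq : squash G q.2 = p then Classical.choose (step n q hq) else q) n
  have hsq0 : squash G (st 0).2 = p := squash_eq_self hpPS
  have hsq : ∀ n, squash G (st n).2 = p := by
    intro n
    induction n with
    | zero => exact hsq0
    | succ n ih =>
      show squash G (if hq : squash G (st n).2 = p then Classical.choose (step n (st n) hq)
        else (st n)).2 = p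
      rw [dif_pos ih]
      exact (Classical.choose_spec (step n (st n) ih)).2.2.1
  have hsucc : ∀ n, st (n+1) = Classical.choose (step n (st n) (hsq n)) := by
    intro n
    show (if hq : _ then _ else _) = _
    rw [dif_pos (hsq n)]
  have hlt : ∀ n, (st n).1 < (st (n+1)).1 := by
    intro n; rw [hsucc n]; exact (Classical.choose_spec (step n (st n) (hsq n))).1
  have hag : ∀ n, ∀ i < (st n).1, (st (n+1)).2 i = (st n).2 i := by
    intro n; rw [hsucc n]; exact (Classical.choose_spec (step n (st n) (hsq n))).2.1
  have hkill : ∀ n, Cyl (st (n+1)).1 (st (n+1)).2 ∩ F n = ∅ := by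
    intro n; rw [hsucc n]; exact (Classical.choose_spec (step n (st n) (hsq n))).2.2.2
  have hamono : Monotone (fun n => (st n).1) :=
    monotone_nat_of_le_succ (fun n => le_of_lt (hlt n))
  have hstab : ∀ n m, n ≤ m → ∀ i < (st n).1, (st m).2 i = (st n).2 i := by
    intro n m hnm
    induction m with
    | zero =>
      intro i hi
      have h0 : n = 0 := Nat.le_zero.1 hnm
      rw [h0]
    | succ m ih =>
      intro i hi
      rcases Nat.lt_succ_iff_lt_or_eq.1 (Nat.lt_succ_of_le hnm) with h' | rfl
      · have h'' : n ≤ m := by omega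
        rw [hag m i (lt_of_lt_of_le hi (hamono h''))]
        exact ih h'' i hi
      · rfl
  have hgrow : ∀ n, n ≤ (st n).1 := by
    intro n
    induction n with
    | zero => exact Nat.zero_le _
    | succ n ih => have := hlt n; omega
  have hzval : ∀ n, ∀ i < (st (n+1)).1, (fun i => (st (i+1)).2 i) i = (st (n+1)).2 i := by
    intro n i hi
    have hii : i < (st (i+1)).1 := lt_of_lt_of_le (Nat.lt_succ_self i) (hgrow (i+1))
    rcases le_total (i+1) (n+1) with h | h
    · exact (hstab (i+1) (n+1) h i hii).symm
    · exact hstab (n+1) (i+1) h i hi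
  set z : XX := fun i => (st (i+1)).2 i with hz
  have hzpre : z ∈ pre G p := by
    show squash G z = p
    funext i
    show min (z i) (G i) = p i
    have : min ((st (i+1)).2 i) (G i) = p i := congrFun (hsq (i+1)) i
    exact this
  have hznF : ∀ n, z ∉ F n := by
    intro n hzF
    have hmem : z ∈ Cyl (st (n+1)).1 (st (n+1)).2 := by
      intro i hi
      exact hzval n i hi
    have : z ∈ Cyl (st (n+1)).1 (st (n+1)).2 ∩ F n := ⟨hmem, hzF⟩
    rw [hkill n] at this; exact this
  have := hsub (hpre hzpre)
  obtain ⟨n, hn⟩ := Set.mem_iUnion.1 this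
  exact hznF n hn

end RW
namespace RW

/-! ## generic iteration machine -/

lemma iterate_states (P : ℕ × XX → Prop) (Q : ℕ → ℕ × XX → Prop)
    (q0 : ℕ × XX) (hq0 : P q0)
    (step : ∀ n q, P q → ∃ r, P r ∧ q.1 < r.1 ∧ (∀ i < q.1, r.2 i = q.2 i) ∧ Q n r) :
    ∃ (y : XX) (st : ℕ → ℕ × XX), st 0 = q0 ∧ (∀ n, P (st n)) ∧ (∀ n, Q n (st (n+1))) ∧
      (∀ n, (st n).1 < (st (n+1)).1) ∧
      (∀ n i, i < (st n).1 → y i = (st n).2 i) := by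
  classical
  let st : ℕ → ℕ × XX := fun n => Nat.rec q0 (fun n q =>
    if hq : P q then Classical.choose (step n q hq) else q) n
  have hP : ∀ n, P (st n) := by
    intro n
    induction n with
    | zero => exact hq0
    | succ n ih =>
      show P (if hq : P (st n) then Classical.choose (step n (st n) hq) else (st n))
      rw [dif_pos ih]
      exact (Classical.choose_spec (step n (st n) ih)).1
  have hsucc : ∀ n, st (n+1) = Classical.choose (step n (st n) (hP n)) := by
    intro n
    show (if hq : _ then _ else _) = _
    rw [dif_pos (hP n)]
  have hlt : ∀ n, (st n).1 < (st (n+1)).1 := by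
    intro n; rw [hsucc n]; exact (Classical.choose_spec (step n (st n) (hP n))).2.1
  have hag : ∀ n, ∀ i < (st n).1, (st (n+1)).2 i = (st n).2 i := by
    intro n; rw [hsucc n]; exact (Classical.choose_spec (step n (st n) (hP n))).2.2.1
  have hQ : ∀ n, Q n (st (n+1)) := by
    intro n; rw [hsucc n]; exact (Classical.choose_spec (step n (st n) (hP n))).2.2.2
  have hamono : Monotone (fun n => (st n).1) :=
    monotone_nat_of_le_succ (fun n => le_of_lt (hlt n))
  have hstab : ∀ n m, n ≤ m → ∀ i < (st n).1, (st m).2 i = (st n).2 i := by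
    intro n m hnm
    induction m with
    | zero =>
      intro i hi
      have h0 : n = 0 := Nat.le_zero.1 hnm
      rw [h0]
    | succ m ih =>
      intro i hi
      rcases Nat.lt_succ_iff_lt_or_eq.1 (Nat.lt_succ_of_le hnm) with h' | rfl
      · have h'' : n ≤ m := by omega
        rw [hag m i (lt_of_lt_of_le hi (hamono h''))]
        exact ih h'' i hi
      · rfl
  have hgrow : ∀ n, n ≤ (st n).1 := by
    intro n
    induction n with
    | zero => exact Nat.zero_le _
    | succ n ih => have := hlt n; omega
  refine ⟨fun i => (st (i+1)).2 i, st, rfl, hP, hQ, hlt, ?_⟩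
  intro n i hi
  have hii : i < (st (i+1)).1 := by have := hgrow (i+1); omega
  rcases le_total (i+1) n with h | h
  · exact (hstab (i+1) n h i hii).symm
  · exact hstab n (i+1) h i hi

/-! ## some basic meagre sets -/

/-- the set of y eventually below f is meagre -/
lemma isMeagre_evbd (f : XX) : IsMeagre {y : XX | ∀ᶠ k in atTop, y k ≤ f k} := by
  apply isMeagre_of_cover (fun N => {y : XX | ∀ k, N ≤ k → y k ≤ f k})
  · intro N
    apply isNowhereDense_of_escape
    intro L s
    refine ⟨max L N + 1, Function.update s (max L N) (f (max L N) + 1), by omega,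
      fun i hi => Function.update_of_ne (by omega) _ _, ?_⟩
    apply Set.eq_empty_of_forall_notMem
    rintro y ⟨hy1, hy2⟩
    have h1 : y (max L N) = f (max L N) + 1 := by
      have := hy1 (max L N) (by omega)
      rwa [Function.update_self] at this
    have h2 : y (max L N) ≤ f (max L N) := hy2 (max L N) (by omega)
    omega
  · intro y hy
    rw [Set.mem_setOf_eq, Filter.eventually_atTop] at hy
    obtain ⟨N, hN⟩ := hy
    exact Set.mem_iUnion.2 ⟨N, hN⟩

/-- the whole Baire space is not meagre -/
lemma not_isMeagre_univ : ¬ IsMeagre (Set.univ : Set XX) := by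
  intro h
  obtain ⟨F, hmono, hcn, hsub⟩ := meagre_cover h
  obtain ⟨y, st, -, -, hQ, -, hyst⟩ := iterate_states (fun _ => True)
    (fun n r => Cyl r.1 r.2 ∩ F n = ∅) (0, fun _ => 0) trivial (by
      intro n q _
      obtain ⟨L', s', hL, hag, hdis⟩ := escape_of_closed_nwd (hcn n).1 (hcn n).2 q.1 q.2
      refine ⟨(L'+1, s'), trivial, by omega, fun i hi => hag i hi, ?_⟩
      apply Set.eq_empty_of_subset_empty
      rw [← hdis]
      exact Set.inter_subset_inter_left _ (Cyl_mono (by omega) _))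
  have : y ∈ ⋃ n, F n := hsub trivial
  obtain ⟨n, hn⟩ := Set.mem_iUnion.1 this
  have hmem : y ∈ Cyl (st (n+1)).1 (st (n+1)).2 := fun i hi => hyst (n+1) i hi
  have : y ∈ Cyl (st (n+1)).1 (st (n+1)).2 ∩ F n := ⟨hmem, hn⟩
  rw [hQ n] at this
  exact this

/-! ## domination extraction from a meagre set -/

/-- From a (cover of a) meagre set B we extract a function g eventually dominating
every monotone f whose "eventually below f" set is inside B. -/
lemma le_foldr_max (l : List ℕ) (a : ℕ) (h : a ∈ l) : a ≤ l.foldr max 0 := by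
  induction l with
  | nil => cases h
  | cons b t ih =>
    rcases List.mem_cons.1 h with rfl | h
    · exact le_max_left _ _
    · exact le_trans (ih h) (le_max_right _ _)

/-- From a (cover of a) meagre set B we extract a function g eventually dominating
every monotone f whose "eventually below f" set is inside B. -/
lemma dominate_of_cover {F : ℕ → Set XX}
    (hcn : ∀ n, IsClosed (F n) ∧ IsNowhereDense (F n)) :
    ∃ g : XX, (∀ k, 1 ≤ g k) ∧ (∀ k, g k < g (k+1)) ∧
      ∀ f : XX, Monotone f → {y : XX | ∀ᶠ k in atTop, y k ≤ f k} ⊆ (⋃ n, F n) →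
        ∀ᶠ k in atTop, f k ≤ g k := by
  classical
  -- escape choice functions
  have esc : ∀ (m L : ℕ) (s : XX), ∃ r : ℕ × XX, L ≤ r.1 ∧ (∀ i < L, r.2 i = s i) ∧
      Cyl r.1 r.2 ∩ F m = ∅ := by
    intro m L s
    obtain ⟨L', s', h1, h2, h3⟩ := escape_of_closed_nwd (hcn m).1 (hcn m).2 L s
    exact ⟨(L', s'), h1, h2, h3⟩
  let E : ℕ → ℕ → XX → ℕ × XX := fun m L s => Classical.choose (esc m L s)
  have Espec : ∀ m L s, L ≤ (E m L s).1 ∧ (∀ i < L, (E m L s).2 i = s i) ∧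
      Cyl (E m L s).1 (E m L s).2 ∩ F m = ∅ := fun m L s => Classical.choose_spec (esc m L s)
  let LS : ℕ → ℕ → List XX := fun len bd => Classical.choose (exists_bdd_list (fun _ => bd) len)
  have LSspec : ∀ len bd, (∀ s ∈ LS len bd, BddStr (fun _ => bd) len s) ∧
      ∀ y ∈ PS (fun _ => bd), ∃ s ∈ LS len bd, ∀ i < len, y i = s i :=
    fun len bd => Classical.choose_spec (exists_bdd_list (fun _ => bd) len)
  let pay : ℕ × XX → ℕ := fun q => max q.1 ((Finset.range q.1).sup q.2)
  let tab : ℕ → ℕ → ℕ := fun j gj =>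
    ((List.range (j+2)).map (fun m =>
      ((LS (j+1) gj).map (fun s => pay (E m (j+1) s))).foldr max 0)).foldr max 0
  let g : ℕ → ℕ := fun k => Nat.rec (motive := fun _ => ℕ) 1
    (fun j gj => max (gj + 1) (tab j gj)) k
  have hgsucc : ∀ j, g (j+1) = max (g j + 1) (tab j (g j)) := fun j => rfl
  have hglt : ∀ k, g k < g (k+1) := by
    intro k
    rw [hgsucc k]
    omega
  have hg1 : ∀ k, 1 ≤ g k := by
    intro k
    induction k with
    | zero => exact le_refl 1
    | succ k ih => have := hglt k; omega
  have hgmono : Monotone g := monotone_nat_of_le_succ (fun k => le_of_lt (hglt k))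
  have htab : ∀ (j n : ℕ), n < j + 2 → ∀ s ∈ LS (j+1) (g j),
      pay (E n (j+1) s) ≤ g (j+1) := by
    intro j n hn s hs
    rw [hgsucc j]
    refine le_trans (le_trans ?_ (le_foldr_max _ _
      (List.mem_map.2 ⟨n, List.mem_range.2 hn, rfl⟩))) (le_max_right _ _)
    exact le_foldr_max _ _ (List.mem_map.2 ⟨s, hs, rfl⟩)
  refine ⟨g, hg1, hglt, ?_⟩
  intro f hf hsub
  by_contra hcon
  rw [Filter.not_eventually] at hcon
  have hfreq : ∀ N : ℕ, ∃ k, N ≤ k ∧ g k < f k := by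
    intro N
    obtain ⟨k, hk1, hk2⟩ := Filter.frequently_atTop.1 hcon N
    exact ⟨k, hk1, by omega⟩
  have step : ∀ n (q : ℕ × XX),
      ((∀ i, q.1 ≤ i → q.2 i = 0) ∧ (∀ i, q.2 i ≤ g q.1) ∧ (∀ i, q.2 i ≤ f i)) →
      ∃ r : ℕ × XX, ((∀ i, r.1 ≤ i → r.2 i = 0) ∧ (∀ i, r.2 i ≤ g r.1) ∧ (∀ i, r.2 i ≤ f i)) ∧
        q.1 < r.1 ∧ (∀ i < q.1, r.2 i = q.2 i) ∧ Cyl r.1 r.2 ∩ F n = ∅ := by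
    rintro n q ⟨hcan, hbd, hbf⟩
    obtain ⟨k, hk1, hk2⟩ := hfreq (max q.1 n + 1)
    obtain ⟨j, rfl⟩ : ∃ j, k = j + 1 := ⟨k - 1, by omega⟩
    have hq1j : q.1 ≤ j := by omega
    have hnj : n < j + 2 := by omega
    have hqPS : q.2 ∈ PS (fun _ => g j) := by
      intro i
      exact le_trans (hbd i) (hgmono hq1j)
    obtain ⟨s, hsl, hsag⟩ := (LSspec (j+1) (g j)).2 q.2 hqPS
    obtain ⟨hE1, hE2, hE3⟩ := Espec n (j+1) s
    have hpay := htab j n hnj s hsl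
    set L' := (E n (j+1) s).1 with hL'
    set s' := (E n (j+1) s).2 with hs'
    have hvalbd : ∀ i < L', s' i ≤ g (j+1) := by
      intro i hi
      refine le_trans ?_ hpay
      exact le_trans (Finset.le_sup (Finset.mem_range.2 hi)) (le_max_right _ _)
    have hagq : ∀ i < j + 1, s' i = q.2 i := by
      intro i hi
      rw [hE2 i hi, ← hsag i hi]
    refine ⟨(L' + 1, fun i => if i < L' then s' i else 0), ⟨?_, ?_, ?_⟩, ?_, ?_, ?_⟩
    · intro i hi
      dsimp only at hi ⊢
      rw [if_neg (by omega)]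
    · intro i
      dsimp only
      by_cases hi : i < L'
      · rw [if_pos hi]
        have h1 : s' i ≤ g (j+1) := hvalbd i hi
        have h2 : g (j+1) ≤ g L' := hgmono hE1
        have h3 : g L' < g (L'+1) := hglt L'
        omega
      · rw [if_neg hi]
        have := hg1 (L'+1); omega
    · intro i
      dsimp only
      by_cases hi : i < L'
      · rw [if_pos hi]
        by_cases hij : i < j + 1
        · rw [hagq i hij]
          exact hbf i
        · calc s' i ≤ g (j+1) := hvalbd i hi
            _ ≤ f (j+1) := by omega
            _ ≤ f i := hf (by omega)
      · rw [if_neg hi]; omega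
    · show q.1 < L' + 1
      omega
    · intro i hi
      dsimp only
      have hij : i < j + 1 := by omega
      have hiL : i < L' := by omega
      rw [if_pos hiL]
      exact hagq i hij
    · apply Set.eq_empty_of_subset_empty
      rw [← hE3]
      apply Set.inter_subset_inter_left
      apply Cyl_sub_of_extend (show L' ≤ L' + 1 by omega)
      intro i hi
      dsimp only
      rw [if_pos hi]
  obtain ⟨y, st, hst0, hP, hQ, hlt, hyst⟩ := iterate_states _ _ ((0 : ℕ), fun _ => (0:ℕ))
    ⟨fun _ _ => rfl, fun i => Nat.zero_le _, fun i => Nat.zero_le _⟩ step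
  have hgrow : ∀ n, n ≤ (st n).1 := by
    intro n
    induction n with
    | zero => exact Nat.zero_le _
    | succ n ih => have := hlt n; omega
  have hyf : ∀ i, y i ≤ f i := by
    intro i
    have h1 : i < (st (i+1)).1 := by have := hgrow (i+1); omega
    rw [hyst (i+1) i h1]
    exact (hP (i+1)).2.2 i
  have hymem : y ∈ {y : XX | ∀ᶠ k in atTop, y k ≤ f k} :=
    Filter.Eventually.of_forall hyf
  obtain ⟨n, hn⟩ := Set.mem_iUnion.1 (hsub hymem)
  have hmem : y ∈ Cyl (st (n+1)).1 (st (n+1)).2 := fun i hi => hyst (n+1) i hi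
  have hbad : y ∈ Cyl (st (n+1)).1 (st (n+1)).2 ∩ F n := ⟨hmem, hn⟩
  rw [hQ n] at hbad
  exact hbad

end RW
namespace RW

/-! ## the unary embedding of Baire space into Cantor space -/

def one : XX := fun _ => 1

def sep (f : XX) : ℕ → ℕ := fun j => Nat.rec (f 0) (fun j p => p + f (j+1) + 1) j

lemma sep_zero (f : XX) : sep f 0 = f 0 := rfl
lemma sep_succ (f : XX) (j : ℕ) : sep f (j+1) = sep f j + f (j+1) + 1 := rfl

lemma sep_lt_succ (f : XX) (j : ℕ) : sep f j < sep f (j+1) := by rw [sep_succ]; omega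

lemma sep_strictMono (f : XX) : StrictMono (sep f) := strictMono_nat_of_lt_succ (sep_lt_succ f)

lemma sep_mono (f : XX) {a b : ℕ} (h : a ≤ b) : sep f a ≤ sep f b :=
  (sep_strictMono f).monotone h

lemma le_sep (f : XX) (j : ℕ) : j ≤ sep f j := by
  induction j with
  | zero => exact Nat.zero_le _
  | succ j ih => rw [sep_succ]; omega

lemma sep_congr {f u : XX} {L : ℕ} (h : ∀ i < L, f i = u i) : ∀ j < L, sep f j = sep u j := by
  intro j hj
  induction j with
  | zero => rw [sep_zero, sep_zero, h 0 (by omega)]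
  | succ j ih => rw [sep_succ, sep_succ, ih (by omega), h (j+1) hj]

open Classical in
noncomputable def phi (f : XX) : XX := fun k => if ∃ j, sep f j = k then 0 else 1

lemma phi_zero {f : XX} {k : ℕ} (h : ∃ j, sep f j = k) : phi f k = 0 := by
  unfold phi
  rw [if_pos h]

lemma phi_one {f : XX} {k : ℕ} (h : ¬ ∃ j, sep f j = k) : phi f k = 1 := by
  unfold phi
  rw [if_neg h]

lemma phi_mem_PSone (f : XX) : phi f ∈ PS one := by
  intro k
  unfold phi
  split <;> simp [one]

lemma exists_sep_of_phi_zero {f : XX} {k : ℕ} (h : phi f k = 0) : ∃ j, sep f j = k := by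
  by_contra hcon
  rw [phi_one hcon] at h
  exact one_ne_zero h

/-- prefix agreement of f determines a prefix of phi f -/
lemma phi_agree {f u : XX} {L : ℕ} (h : ∀ i < L + 1, f i = u i) :
    ∀ k ≤ sep u L, phi f k = phi u k := by
  intro k hk
  have hsep : ∀ j < L + 1, sep f j = sep u j := sep_congr h
  have hiff : (∃ j, sep f j = k) ↔ (∃ j, sep u j = k) := by
    constructor
    · rintro ⟨j, rfl⟩
      have hjL : j < L + 1 := by
        by_contra hj
        have : sep u L < sep f j := by
          calc sep u L = sep f L := (hsep L (by omega)).symm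
            _ < sep f j := sep_strictMono f (by omega)
        omega
      exact ⟨j, (hsep j hjL).symm⟩
    · rintro ⟨j, rfl⟩
      have hjL : j < L + 1 := by
        by_contra hj
        have : sep u L < sep u j := sep_strictMono u (by omega)
        omega
      exact ⟨j, hsep j hjL⟩
  rcases Classical.em (∃ j, sep u j = k) with hex | hex
  · rw [phi_zero (hiff.2 hex), phi_zero hex]
  · rw [phi_one (fun hc => hex (hiff.1 hc)), phi_one hex]

/-- a prefix of phi determines a prefix of f -/
lemma phi_inj_prefix {f u : XX} {c : ℕ}
    (h : ∀ k ≤ sep u c, phi f k = phi u k) : ∀ j < c + 1, f j = u j := by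
  have hsep : ∀ j, j ≤ c → sep f j = sep u j := by
    intro j
    induction j using Nat.strong_induction_on with
    | _ j ih =>
      intro hjc
      have hle : sep f j ≤ sep u j := by
        by_contra hcon
        push_neg at hcon
        have h0 : phi f (sep u j) = 0 := by
          rw [h (sep u j) (sep_mono u hjc)]
          exact phi_zero ⟨j, rfl⟩
        obtain ⟨i, hi⟩ := exists_sep_of_phi_zero h0
        have hij : i < j := by
          by_contra hij
          have := sep_mono f (show j ≤ i by omega)
          omega
        rcases Nat.eq_zero_or_pos j with rfl | hj0
        · omega
        · have h1 : sep f i ≤ sep f (j-1) := sep_mono f (by omega)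
          have h2 : sep f (j-1) = sep u (j-1) := ih (j-1) (by omega) (by omega)
          have h3 : sep u (j-1) < sep u j := sep_strictMono u (by omega)
          omega
      have hge : sep u j ≤ sep f j := by
        by_contra hcon
        push_neg at hcon
        have h0 : phi u (sep f j) = 0 := by
          rw [← h (sep f j) (le_trans (le_of_lt hcon) (sep_mono u hjc))]
          exact phi_zero ⟨j, rfl⟩
        obtain ⟨i, hi⟩ := exists_sep_of_phi_zero h0
        have hij : i < j := by
          by_contra hij
          have := sep_mono u (show j ≤ i by omega)
          omega
        rcases Nat.eq_zero_or_pos j with rfl | hj0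
        · omega
        · have h1 : sep u i ≤ sep u (j-1) := sep_mono u (by omega)
          have h2 : sep f (j-1) = sep u (j-1) := ih (j-1) (by omega) (by omega)
          have h3 : sep f (j-1) < sep f j := sep_strictMono f (by omega)
          omega
      omega
  intro j hj
  cases j with
  | zero =>
    have := hsep 0 (by omega)
    rw [sep_zero, sep_zero] at this
    exact this
  | succ j =>
    have h1 := hsep (j+1) (by omega)
    have h2 := hsep j (by omega)
    rw [sep_succ, sep_succ] at h1
    omega

/-- every binary string (with a 0 appended) is a phi-prefix -/
lemma phi_realize : ∀ (L : ℕ) (s : XX), (∀ i < L, s i ≤ 1) →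
    ∃ (c : ℕ) (f₀ : XX), sep f₀ c = L ∧
      ∀ k ≤ L, phi f₀ k = if k = L then 0 else s k := by
  intro L
  induction L using Nat.strong_induction_on with
  | _ L ih =>
    intro s hs
    by_cases hz : ∃ m, m < L ∧ s m = 0
    · -- take the largest zero position
      obtain ⟨m0, hm0, hs0⟩ := hz
      have hbdd : ∃ m, m < L ∧ s m = 0 ∧ ∀ i, m < i → i < L → s i = 1 := by
        classical
        set P : ℕ → Prop := fun m => m < L ∧ s m = 0 with hPdef
        have hPm : P m0 := ⟨hm0, hs0⟩
        have hspec : P (Nat.findGreatest P L) :=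
          Nat.findGreatest_spec (show m0 ≤ L by omega) hPm
        refine ⟨Nat.findGreatest P L, hspec.1, hspec.2, ?_⟩
        intro i hmi hiL
        by_contra hsi
        have hi1 : s i = 0 := by have := hs i hiL; omega
        have := Nat.le_findGreatest (show i ≤ L by omega) (show P i from ⟨hiL, hi1⟩)
        omega
      obtain ⟨m, hmL, hsm, hlast⟩ := hbdd
      obtain ⟨c₁, f₁, hsep1, hphi1⟩ := ih m hmL s (fun i hi => hs i (by omega))
      set f₀ : XX := fun j => if j ≤ c₁ then f₁ j else if j = c₁ + 1 then L - m - 1 else 0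
        with hf₀
      have hagree : ∀ i < c₁ + 1, f₀ i = f₁ i := by
        intro i hi
        simp only [hf₀, if_pos (show i ≤ c₁ by omega)]
      have hsagree : ∀ j < c₁ + 1, sep f₀ j = sep f₁ j := sep_congr hagree
      have hval : f₀ (c₁ + 1) = L - m - 1 := by
        simp [hf₀]
      have hsepL : sep f₀ (c₁ + 1) = L := by
        rw [sep_succ, hsagree c₁ (by omega), hsep1, hval]
        omega
      have hbig : ∀ j, c₁ + 2 ≤ j → L < sep f₀ j := by
        intro j hj
        calc L = sep f₀ (c₁ + 1) := hsepL.symm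
          _ < sep f₀ j := sep_strictMono f₀ (by omega)
      refine ⟨c₁ + 1, f₀, hsepL, ?_⟩
      intro k hk
      by_cases hkL : k = L
      · subst hkL
        rw [if_pos rfl]
        exact phi_zero ⟨c₁ + 1, hsepL⟩
      rw [if_neg hkL]
      have hkL' : k < L := by omega
      by_cases hkm : k ≤ m
      · have h1 : phi f₀ k = phi f₁ k := by
          apply phi_agree hagree
          rw [hsep1]; exact hkm
        rw [h1, hphi1 k hkm]
        by_cases hkm' : k = m
        · subst hkm'
          rw [if_pos rfl, hsm]
        · rw [if_neg hkm']
      · have h1 : phi f₀ k = 1 := by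
          apply phi_one
          rintro ⟨j, hj⟩
          rcases lt_trichotomy j (c₁ + 1) with hlt | heq | hgt
          · have := hsagree j hlt
            have h2 : sep f₁ j ≤ sep f₁ c₁ := sep_mono f₁ (by omega)
            omega
          · subst heq; omega
          · have := hbig j (by omega)
            omega
        rw [h1, hlast k (by omega) hkL']
    · push_neg at hz
      refine ⟨0, fun j => if j = 0 then L else 0, by rw [sep_zero]; simp, ?_⟩
      intro k hk
      have hsepv : ∀ j, sep (fun j => if j = 0 then L else 0) j = L + j := by
        intro j
        induction j with
        | zero => rw [sep_zero]; simp
        | succ j ihj =>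
          rw [sep_succ, ihj]
          simp only [if_neg (Nat.succ_ne_zero j)]
          omega
      by_cases hkL : k = L
      · subst hkL
        rw [if_pos rfl]
        exact phi_zero ⟨0, by rw [hsepv 0]; omega⟩

      · rw [if_neg hkL]
        have : ¬ ∃ j, sep (fun j => if j = 0 then L else 0) j = k := by
          rintro ⟨j, hj⟩
          rw [hsepv j] at hj
          omega
        rw [phi_one this]
        have hk' : k < L := by omega
        have := hz k hk'
        have := hs k hk'
        omega

end RW
namespace RW

/-! ## transfer of meagreness along phi -/

lemma meagreP_phi_image {A : Set XX} (hA : IsMeagre A) : MeagreP one (phi '' A) := by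
  obtain ⟨F, hmono, hcn, hsub⟩ := meagre_cover hA
  refine ⟨fun m => phi '' (F m), fun a b hab => Set.image_mono (hmono hab), ?_, ?_⟩
  · intro m L s hs
    obtain ⟨c, f₀, hsep₀, hphi₀⟩ := phi_realize L s hs
    obtain ⟨c', u', h1, h2, h3⟩ := escape_of_closed_nwd (hcn m).1 (hcn m).2 (c+1) f₀
    obtain ⟨d, rfl⟩ : ∃ d, c' = d + 1 := ⟨c' - 1, by omega⟩
    have hd : c ≤ d := by omega
    have hsepagree : ∀ j < c + 1, sep u' j = sep f₀ j := sep_congr h2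
    have hsepuc : sep u' c = L := by rw [hsepagree c (by omega), hsep₀]
    have hLL' : L < sep u' d + 1 := by
      have : sep u' c ≤ sep u' d := sep_mono u' hd
      omega
    refine ⟨sep u' d + 1, phi u', by omega, ?_, ?_, ?_⟩
    · intro i hi
      have h4 : phi u' i = phi f₀ i := phi_agree h2 i (by omega)
      rw [h4, hphi₀ i (by omega), if_neg (by omega)]
    · intro i _
      exact phi_mem_PSone u' i
    · apply Set.eq_empty_of_forall_notMem
      rintro z ⟨⟨hz1, hz2⟩, y, hyF, rfl⟩
      have hagy : ∀ k ≤ sep u' d, phi y k = phi u' k := by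
        intro k hk
        exact (hz2 k (by omega)).symm ▸ (hz2 k (by omega))
      have := phi_inj_prefix hagy
      have hyCyl : y ∈ Cyl (d+1) u' := fun i hi => this i hi
      have : y ∈ Cyl (d+1) u' ∩ F m := ⟨hyCyl, hyF⟩
      rw [h3] at this
      exact this
  · rintro z ⟨⟨y, hyA, rfl⟩, -⟩
    obtain ⟨m, hm⟩ := Set.mem_iUnion.1 (hsub hyA)
    exact Set.mem_iUnion.2 ⟨m, ⟨y, hm, rfl⟩⟩

lemma isMeagre_phi_preimage {W : Set XX} (hW : MeagreP one W) :
    IsMeagre (phi ⁻¹' W) := by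
  obtain ⟨C, hmono, hnwd, hsub⟩ := hW
  apply isMeagre_of_cover (fun n => phi ⁻¹' (C n))
  · intro n
    apply isNowhereDense_of_escape
    intro L s
    set Lb : ℕ := sep s L + 1 with hLb
    obtain ⟨Lb', t', hLbLb', hag, hbdd', hdis⟩ := hnwd n Lb (phi s)
      (fun i _ => phi_mem_PSone s i)
    obtain ⟨c₂, f₂, hsep₂, hphi₂⟩ := phi_realize Lb' t' (fun i hi => hbdd' i hi)
    have hagLb : ∀ k < Lb, phi f₂ k = phi s k := by
      intro k hk
      have h1 : phi f₂ k = t' k := by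
        rw [hphi₂ k (by omega), if_neg (by omega)]
      rw [h1, hag k hk]
    have hA : ∀ j < L + 1, f₂ j = s j := by
      apply phi_inj_prefix
      intro k hk
      exact hagLb k (by omega)
    have hsepA : ∀ j < L + 1, sep f₂ j = sep s j := sep_congr hA
    have hLc₂ : L < c₂ := by
      have h1 : sep f₂ L = sep s L := hsepA L (by omega)
      have h2 : sep f₂ L < sep f₂ c₂ := by
        rw [hsep₂, h1]; omega
      exact (sep_strictMono f₂).lt_iff_lt.1 h2
    refine ⟨c₂ + 1, f₂, by omega, fun i hi => hA i (by omega), ?_⟩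
    apply Set.eq_empty_of_forall_notMem
    rintro y ⟨hy1, hy2⟩
    have hagy : ∀ k ≤ sep f₂ c₂, phi y k = phi f₂ k := by
      apply phi_agree
      intro i hi
      exact hy1 i hi
    have hmem : phi y ∈ PCyl one Lb' t' := by
      refine ⟨fun k => phi_mem_PSone y k, ?_⟩
      intro k hk
      rw [hagy k (by omega), hphi₂ k (by omega), if_neg (by omega)]
    have : phi y ∈ PCyl one Lb' t' ∩ C n := ⟨hmem, hy2⟩
    rw [hdis] at this
    exact this
  · intro y hy
    have : phi y ∈ W ∩ PS one := ⟨hy, phi_mem_PSone y⟩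
    obtain ⟨n, hn⟩ := Set.mem_iUnion.1 (hsub this)
    exact Set.mem_iUnion.2 ⟨n, hn⟩

end RW
namespace RW

/-! ## the matching argument and direction A -/

def SetNE (f' : XX) : Set XX := {y : XX | ∀ᶠ k in atTop, y k ≠ f' k}

lemma meagreP_SetNE (G : XX) {f' : XX} (hf' : f' ∈ PS G) : MeagreP G (SetNE f') := by
  refine ⟨fun N => {y : XX | ∀ k, N ≤ k → y k ≠ f' k}, ?_, ?_, ?_⟩
  · intro a b hab y hy k hk
    exact hy k (by omega)
  · intro N L s hs
    set M := max L N with hM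
    refine ⟨M + 1, fun i => if i = M then f' M else if i < L then s i else 0, by omega,
      fun i hi => by dsimp only; rw [if_neg (show ¬ i = M by omega), if_pos hi], ?_, ?_⟩
    · intro i hi
      dsimp only
      by_cases h : i = M
      · subst h; rw [if_pos rfl]; exact hf' _
      · rw [if_neg h]
        by_cases hiL : i < L
        · rw [if_pos hiL]; exact hs i hiL
        · rw [if_neg hiL]; exact Nat.zero_le _
    · apply Set.eq_empty_of_forall_notMem
      rintro y ⟨⟨hy1, hy2⟩, hy3⟩
      have h1 : y M = f' M := by
        have := hy2 M (by omega)
        dsimp only at this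
        rwa [if_pos rfl] at this
      exact hy3 M (by omega) h1
  · rintro y ⟨hy1, -⟩
    rw [SetNE, Set.mem_setOf_eq, Filter.eventually_atTop] at hy1
    obtain ⟨N, hN⟩ := hy1
    exact Set.mem_iUnion.2 ⟨N, hN⟩

lemma matchP {G : XX} (hG1 : ∀ k, 1 ≤ G k) {J : IntPart} {x : XX} (hx : x ∈ PS G)
    {f' : XX} (hf' : f' ∈ PS G)
    (hchar : ∀ p ∈ SetNE f' ∩ PS G,
      ∀ᶠ n in atTop, ∃ i, J.e n ≤ i ∧ i < J.e (n + 1) ∧ p i ≠ x i) :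
    ∀ᶠ n in atTop, ∃ k, J.e n ≤ k ∧ k < J.e (n + 1) ∧ x k = f' k := by
  by_contra hcon
  rw [Filter.not_eventually] at hcon
  have hfreq : ∃ᶠ n in atTop, ∀ k, J.e n ≤ k → k < J.e (n+1) → x k ≠ f' k := by
    apply hcon.mono
    intro n hn k h1 h2 h3
    exact hn ⟨k, h1, h2, h3⟩
  set y : XX := fun k => if x k = f' k then (if f' k = 0 then 1 else 0) else x k with hy
  have hyPS : y ∈ PS G := by
    intro k
    simp only [hy]
    by_cases h1 : x k = f' k
    · rw [if_pos h1]
      by_cases h2 : f' k = 0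
      · rw [if_pos h2]; exact hG1 k
      · rw [if_neg h2]; exact Nat.zero_le _
    · rw [if_neg h1]; exact hx k
  have hyNE : y ∈ SetNE f' := by
    apply Filter.Eventually.of_forall
    intro k
    simp only [hy]
    by_cases h1 : x k = f' k
    · rw [if_pos h1]
      by_cases h2 : f' k = 0
      · rw [if_pos h2, h2]; omega
      · rw [if_neg h2]; omega
    · rw [if_neg h1]; exact h1
  have hev := hchar y ⟨hyNE, hyPS⟩
  obtain ⟨n, hbad, i, hi1, hi2, hne⟩ := (hfreq.and_eventually hev).exists
  have hxi : x i ≠ f' i := hbad i hi1 hi2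
  apply hne
  simp only [hy]
  rw [if_neg hxi]

/-- index is at most the partition point -/
lemma IntPart.le_e (J : IntPart) (n : ℕ) : n ≤ J.e n := by
  induction n with
  | zero => exact Nat.zero_le _
  | succ n ih => have := J.mono (show n < n + 1 by omega); omega

def fhat (f : XX) : XX := fun k => (Finset.range (k+1)).sup f

lemma fhat_mono (f : XX) : Monotone (fhat f) := by
  intro a b hab
  apply Finset.sup_mono
  intro i hi
  simp only [Finset.mem_range] at *
  omega

lemma le_fhat (f : XX) (k : ℕ) : f k ≤ fhat f k :=
  Finset.le_sup (Finset.mem_range.2 (Nat.lt_succ_self k))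

/-- direction A : two-round extraction of a matching pair from two meagre sets -/
lemma directionA_main : ∃ (N1 : XX → Set XX) (N2 : Set XX → XX → Set XX)
    (JX : Set XX → Set XX → IntPart × XX),
    (∀ f, IsMeagre (N1 f)) ∧ (∀ B₁ f, IsMeagre (N2 B₁ f)) ∧
    ∀ B₁ B₂ : Set XX, IsMeagre B₁ → IsMeagre B₂ →
      ∀ f : XX, N1 f ⊆ B₁ → N2 B₁ f ⊆ B₂ →
        sqb (JX B₁ B₂).1 f (JX B₁ B₂).2 := by
  classical
  have hGG : ∀ B : Set XX, ∃ g : XX, (∀ k, 1 ≤ g k) ∧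
      (IsMeagre B → ∀ f : XX, Monotone f → {y : XX | ∀ᶠ k in atTop, y k ≤ f k} ⊆ B →
        ∀ᶠ k in atTop, f k ≤ g k) := by
    intro B
    by_cases h : IsMeagre B
    · obtain ⟨F, hFmono, hcn, hsub⟩ := meagre_cover h
      obtain ⟨g, hg1, _, hgdom⟩ := dominate_of_cover hcn
      exact ⟨g, hg1, fun _ f hf hsubf => hgdom f hf (hsubf.trans hsub)⟩
    · exact ⟨one, fun _ => le_refl 1, fun hB => absurd hB h⟩
  choose GG hGG1 hGGdom using hGG
  have hJXex : ∀ B₁ B₂ : Set XX, ∃ Jx : IntPart × XX, Jx.2 ∈ PS (GG B₁) ∧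
      (IsMeagre B₂ → ∀ y ∈ canonical (GG B₁) B₂ ∩ PS (GG B₁),
        ∀ᶠ n in atTop, ∃ i, Jx.1.e n ≤ i ∧ i < Jx.1.e (n+1) ∧ y i ≠ Jx.2 i) := by
    intro B₁ B₂
    by_cases h : IsMeagre B₂
    · obtain ⟨J, x, hx, hch⟩ := charP (canonical_meagreP (G := GG B₁) h)
      exact ⟨(J, x), hx, fun _ => hch⟩
    · exact ⟨(⟨id, rfl, strictMono_id⟩, fun _ => 0),
        fun k => Nat.zero_le _, fun hB => absurd hB h⟩
  choose JX hJXPS hJXchar using hJXex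
  refine ⟨fun f => {y : XX | ∀ᶠ k in atTop, y k ≤ fhat f k},
    fun B f => {y : XX | squash (GG B) y ∈ SetNE (fun k => min (f k) (GG B k))},
    JX, fun f => isMeagre_evbd (fhat f), ?_, ?_⟩
  · intro B f
    exact isMeagre_squash_preimage (meagreP_SetNE (GG B) (fun k => min_le_right _ _))
  · intro B₁ B₂ hB₁ hB₂ f hN1 hN2
    set G := GG B₁ with hGdef
    set f' : XX := fun k => min (f k) (G k) with hf'def
    have hf'PS : f' ∈ PS G := fun k => min_le_right _ _
    have hdom : ∀ᶠ k in atTop, f k ≤ G k := by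
      have := hGGdom B₁ hB₁ (fhat f) (fhat_mono f) hN1
      apply this.mono
      intro k hk
      exact le_trans (le_fhat f k) hk
    have hchain : SetNE f' ∩ PS G ⊆ canonical G B₂ ∩ PS G := by
      rintro p ⟨hp1, hp2⟩
      refine ⟨⟨hp2, ?_⟩, hp2⟩
      intro y hy
      apply hN2
      show squash G y ∈ SetNE f'
      rw [show squash G y = p from hy]
      exact hp1
    have hchar : ∀ p ∈ SetNE f' ∩ PS G,
        ∀ᶠ n in atTop, ∃ i, (JX B₁ B₂).1.e n ≤ i ∧ i < (JX B₁ B₂).1.e (n+1) ∧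
          p i ≠ (JX B₁ B₂).2 i := by
      intro p hp
      exact hJXchar B₁ B₂ hB₂ p (hchain hp)
    have hmatch := matchP (hGG1 B₁) (hJXPS B₁ B₂) hf'PS hchar
    -- upgrade from f' to f
    rw [Filter.eventually_atTop] at hdom
    obtain ⟨K, hK⟩ := hdom
    rw [sqb, Filter.eventually_atTop]
    rw [Filter.eventually_atTop] at hmatch
    obtain ⟨N, hN⟩ := hmatch
    refine ⟨max N K, fun n hn => ?_⟩
    obtain ⟨k, h1, h2, h3⟩ := hN n (by omega)
    refine ⟨k, h1, h2, ?_⟩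
    have hkK : K ≤ k := by
      have := IntPart.le_e (JX B₁ B₂).1 n
      omega
    have := hK k hkK
    rw [h3, hf'def]
    dsimp only
    omega
  
end RW
namespace RW

/-! ## direction B : coding a meagre set by two rounds of reals -/

lemma getD_range_map (f : ℕ → ℕ) (n i : ℕ) (h : i < n) :
    ((List.range n).map f).getD i 0 = f i := by
  rw [List.getD_eq_getElem?_getD]
  simp [List.getElem?_map, List.getElem?_range, h]

/-- decoded components of a code -/
def aOf (c : ℕ) : ℕ := c.unpair.1
def bOf (c : ℕ) : ℕ := c.unpair.2.unpair.1
noncomputable def lOf (c : ℕ) : List ℕ :=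
  (Encodable.decode (α := List ℕ) c.unpair.2.unpair.2).getD []

lemma code_decomp (a b : ℕ) (l : List ℕ) :
    aOf (Nat.pair a (Nat.pair b (Encodable.encode l))) = a ∧
    bOf (Nat.pair a (Nat.pair b (Encodable.encode l))) = b ∧
    lOf (Nat.pair a (Nat.pair b (Encodable.encode l))) = l := by
  refine ⟨?_, ?_, ?_⟩
  · rw [aOf, Nat.unpair_pair]
  · rw [bOf, Nat.unpair_pair]
    simp [Nat.unpair_pair]
  · rw [lOf, Nat.unpair_pair]
    simp [Nat.unpair_pair, Encodable.encodek]

/-- validity of a code for position k relative to window scale T -/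
def ValidAt (T : ℕ → ℕ) (k c : ℕ) : Prop :=
  T k ≤ aOf c ∧ aOf c < bOf c ∧ bOf c ≤ T (k+1) ∧
    (lOf c).length = bOf c - aOf c ∧ (∀ v ∈ lOf c, v ≤ 1)

/-- the refutation condition -/
def Qp (T : ℕ → ℕ) (k c : ℕ) (z : XX) : Prop :=
  ValidAt T k c ∧ ∃ i < bOf c - aOf c, z (aOf c + i) ≠ (lOf c).getD i 0

/-- the coded meagre set determined by a window scale and a pair (I², h²) -/
def WB (T : ℕ → ℕ) (q : IntPart × XX) : Set XX :=
  {z | ∀ᶠ m in atTop, ∃ k, q.1.e m ≤ k ∧ k < q.1.e (m+1) ∧ Qp T k (q.2 k) z}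

lemma strictMono_ge_id {T : ℕ → ℕ} (hT : StrictMono T) (k : ℕ) : k ≤ T k := by
  induction k with
  | zero => exact Nat.zero_le _
  | succ k ih => have := hT (show k < k + 1 by omega); omega

lemma window_inj {T : ℕ → ℕ} (hT : StrictMono T) {k k' i : ℕ}
    (h1 : T k ≤ i) (h2 : i < T (k+1)) (h3 : T k' ≤ i) (h4 : i < T (k'+1)) : k = k' := by
  rcases lt_trichotomy k k' with h | h | h
  · have : T (k+1) ≤ T k' := hT.monotone (by omega)
    omega
  · exact h
  · have : T (k'+1) ≤ T k := hT.monotone (by omega)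
    omega

lemma getD_le_one {l : List ℕ} (hl : ∀ v ∈ l, v ≤ 1) (i : ℕ) : l.getD i 0 ≤ 1 := by
  by_cases h : i < l.length
  · rw [List.getD_eq_getElem l 0 h]
    exact hl _ (List.getElem_mem h)
  · rw [List.getD_eq_default l 0 (by omega)]
    omega

lemma meagreWB {T : ℕ → ℕ} (hT : StrictMono T) (q : IntPart × XX) :
    MeagreP one (WB T q) := by
  classical
  refine ⟨fun N => {z | ∀ m, N ≤ m → ∃ k, q.1.e m ≤ k ∧ k < q.1.e (m+1) ∧ Qp T k (q.2 k) z},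
    ?_, ?_, ?_⟩
  · intro a b hab z hz m hm
    exact hz m (by omega)
  · intro N L u hu
    set m := max N L with hm
    -- the condition describing patched positions
    set Cond : ℕ → ℕ → Prop := fun k i =>
      (q.1.e m ≤ k ∧ k < q.1.e (m+1)) ∧ ValidAt T k (q.2 k) ∧ aOf (q.2 k) ≤ i ∧ i < bOf (q.2 k)
      with hCond
    have hConduniq : ∀ k k' i, Cond k i → Cond k' i → k = k' := by
      rintro k k' i ⟨-, hv, ha, hb⟩ ⟨-, hv', ha', hb'⟩
      exact window_inj hT (le_trans hv.1 ha) (lt_of_lt_of_le hb hv.2.2.1)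
        (le_trans hv'.1 ha') (lt_of_lt_of_le hb' hv'.2.2.1)
    set u' : XX := fun i => if i < L then u i
      else if h : ∃ k, Cond k i then (lOf (q.2 (Classical.choose h))).getD
        (i - aOf (q.2 (Classical.choose h))) 0 else 0 with hu'
    refine ⟨T (q.1.e (m+1)), u', ?_, fun i hi => by rw [hu']; dsimp only; rw [if_pos hi], ?_, ?_⟩
    · -- L ≤ T (e (m+1))
      have h1 : m + 1 ≤ q.1.e (m+1) := IntPart.le_e _ _
      have h2 := strictMono_ge_id hT (q.1.e (m+1))
      omega
    · -- bounded by one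
      intro i _
      rw [hu']
      dsimp only
      by_cases h1 : i < L
      · rw [if_pos h1]; exact hu i h1
      · rw [if_neg h1]
        by_cases h2 : ∃ k, Cond k i
        · rw [dif_pos h2]
          have hspec := Classical.choose_spec h2
          exact getD_le_one hspec.2.1.2.2.2.2 _
        · rw [dif_neg h2]
          show (0 : ℕ) ≤ 1
          omega
    · apply Set.eq_empty_of_forall_notMem
      rintro z ⟨⟨hz1, hz2⟩, hz3⟩
      obtain ⟨k, hk1, hk2, hQ⟩ := hz3 m (by omega)
      obtain ⟨hval, i, hib, hne⟩ := hQ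
      apply hne
      -- the position of the disagreement lies in the patched region
      set pos := aOf (q.2 k) + i with hpos
      have hposk : T k ≤ pos ∧ pos < T (k+1) := by
        constructor
        · exact le_trans hval.1 (by omega)
        · have : pos < bOf (q.2 k) := by omega
          exact lt_of_lt_of_le this hval.2.2.1
      have hCondk : Cond k pos := ⟨⟨hk1, hk2⟩, hval, by omega, by omega⟩
      have hposL : ¬ pos < L := by
        have h1 : m ≤ q.1.e m := IntPart.le_e _ _
        have h2 : q.1.e m ≤ T (q.1.e m) := strictMono_ge_id hT _
        have h3 : T (q.1.e m) ≤ T k := hT.monotone hk1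
        omega
      have hposL' : pos < T (q.1.e (m+1)) := by
        have h1 : k + 1 ≤ q.1.e (m+1) := hk2
        have h2 : T (k+1) ≤ T (q.1.e (m+1)) := hT.monotone h1
        omega
      have hzpos : z pos = u' pos := hz2 pos hposL'
      rw [hzpos, hu']
      dsimp only
      rw [if_neg hposL]
      have hex : ∃ k', Cond k' pos := ⟨k, hCondk⟩
      rw [dif_pos hex]
      have := hConduniq (Classical.choose hex) k pos (Classical.choose_spec hex) hCondk
      rw [this, hpos]
      congr 1
      omega
  · rintro z ⟨hz1, -⟩
    rw [WB, Set.mem_setOf_eq, Filter.eventually_atTop] at hz1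
    obtain ⟨N, hN⟩ := hz1
    exact Set.mem_iUnion.2 ⟨N, fun m hm => hN m hm⟩

/-- the window scale extracted from a first-round bound -/
noncomputable def HH (p : IntPart × XX) (j : ℕ) : ℕ := (Finset.Icc 0 (p.1.e (j+1))).sup p.2

noncomputable def TT (p : IntPart × XX) : ℕ → ℕ := fun k =>
  Nat.rec (motive := fun _ => ℕ) 0
    (fun k Tk => max (Tk + 1)
      (HH p (Nat.find (⟨Tk + k + 2, IntPart.le_e p.1 (Tk + k + 2)⟩ :
        ∃ j, Tk + k + 2 ≤ p.1.e j)) + 1)) k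

noncomputable def jjf (p : IntPart × XX) (k : ℕ) : ℕ :=
  Nat.find (⟨TT p k + k + 2, IntPart.le_e p.1 (TT p k + k + 2)⟩ :
    ∃ j, TT p k + k + 2 ≤ p.1.e j)

lemma TT_succ (p : IntPart × XX) (k : ℕ) :
    TT p (k+1) = max (TT p k + 1) (HH p (jjf p k) + 1) := rfl

lemma TT_strict (p : IntPart × XX) : StrictMono (TT p) := by
  apply strictMono_nat_of_lt_succ
  intro k
  rw [TT_succ]
  omega

lemma jjf_spec (p : IntPart × XX) (k : ℕ) : TT p k + k + 2 ≤ p.1.e (jjf p k) :=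
  Nat.find_spec (⟨TT p k + k + 2, IntPart.le_e p.1 (TT p k + k + 2)⟩ :
    ∃ j, TT p k + k + 2 ≤ p.1.e j)

lemma jjf_min (p : IntPart × XX) (k : ℕ) {j : ℕ} (h : TT p k + k + 2 ≤ p.1.e j) :
    jjf p k ≤ j := Nat.find_min' (⟨TT p k + k + 2, IntPart.le_e p.1 (TT p k + k + 2)⟩ :
      ∃ j, TT p k + k + 2 ≤ p.1.e j) h

lemma jjf_large (p : IntPart × XX) (j₀ : ℕ) {k : ℕ} (hk : p.1.e j₀ ≤ k) :
    j₀ ≤ jjf p k := by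
  by_contra h
  push_neg at h
  have h1 : p.1.e (jjf p k) ≤ p.1.e j₀ := p.1.mono.monotone (by omega)
  have h2 := jjf_spec p k
  have h3 : k ≤ TT p k := strictMono_ge_id (TT_strict p) k
  omega

end RW
namespace RW

/-- direction B main lemma: each meagre set is captured after two rounds of bounding -/
lemma directionB_main : ∃ (R1 : Set XX → XX) (R2 : Set XX → (IntPart × XX) → XX)
    (W : (IntPart × XX) → (IntPart × XX) → Set XX),
    (∀ p q, IsMeagre (W p q)) ∧
    ∀ A : Set XX, IsMeagre A → ∀ p, sqb p.1 (R1 A) p.2 →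
      ∀ q, sqb q.1 (R2 A p) q.2 → A ⊆ W p q := by
  classical
  have hJAex : ∀ A : Set XX, ∃ Jx : IntPart × XX, Jx.2 ∈ PS one ∧
      (IsMeagre A → ∀ z ∈ (phi '' A) ∩ PS one,
        ∀ᶠ n in atTop, ∃ i, Jx.1.e n ≤ i ∧ i < Jx.1.e (n+1) ∧ z i ≠ Jx.2 i) := by
    intro A
    by_cases h : IsMeagre A
    · obtain ⟨J, x, hx, hch⟩ := charP (meagreP_phi_image h)
      exact ⟨(J, x), hx, fun _ => hch⟩
    · exact ⟨(⟨id, rfl, strictMono_id⟩, fun _ => 0),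
        fun k => Nat.zero_le _, fun hB => absurd hB h⟩
  choose JA hJAPS hJAchar using hJAex
  -- second round real
  have hnOfex : ∀ (A : Set XX) (p : IntPart × XX) (k : ℕ),
      ∃ n, k ≤ n ∧ TT p k ≤ (JA A).1.e n := by
    intro A p k
    refine ⟨max k (TT p k), by omega, ?_⟩
    exact le_trans (le_max_right _ _) (IntPart.le_e _ _)
  set nOf : Set XX → (IntPart × XX) → ℕ → ℕ := fun A p k => Nat.find (hnOfex A p k) with hnOf
  have hnOf1 : ∀ A p k, k ≤ nOf A p k ∧ TT p k ≤ (JA A).1.e (nOf A p k) :=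
    fun A p k => Nat.find_spec (hnOfex A p k)
  have hnOf2 : ∀ A p k, nOf A p k ≤ max k (TT p k) := by
    intro A p k
    apply Nat.find_min' (hnOfex A p k)
    exact ⟨by omega, le_trans (le_max_right _ _) (IntPart.le_e _ _)⟩
  set R2 : Set XX → (IntPart × XX) → XX := fun A p k =>
    Nat.pair ((JA A).1.e (nOf A p k)) (Nat.pair ((JA A).1.e (nOf A p k + 1))
      (Encodable.encode ((List.range ((JA A).1.e (nOf A p k + 1) - (JA A).1.e (nOf A p k))).map
        (fun i => (JA A).2 ((JA A).1.e (nOf A p k) + i))))) with hR2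
  refine ⟨fun A => (JA A).1.e, R2, fun p q => phi ⁻¹' (WB (TT p) q), ?_, ?_⟩
  · intro p q
    exact isMeagre_phi_preimage (meagreWB (TT_strict p) q)
  · intro A hA p hp q hq y hyA
    set J := (JA A).1 with hJ
    set x := (JA A).2 with hx
    -- first round: the height function controls the partition J
    have hH : ∀ᶠ j in atTop, J.e (p.1.e j) ≤ HH p j := by
      apply hp.mono
      rintro j ⟨k, hk1, hk2, hk3⟩
      have h1 : p.2 k ≤ HH p j := by
        apply Finset.le_sup
        rw [Finset.mem_Icc]
        have := p.1.mono (show j < j + 1 by omega)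
        omega
      have h2 : J.e (p.1.e j) ≤ J.e k := J.mono.monotone hk1
      have h3 : J.e k = p.2 k := hk3
      omega
    rw [Filter.eventually_atTop] at hH
    obtain ⟨j₀, hj₀⟩ := hH
    -- window containment for large k
    have hwin : ∀ k, p.1.e j₀ ≤ k → J.e (nOf A p k + 1) < TT p (k+1) := by
      intro k hk
      have hjj : j₀ ≤ jjf p k := jjf_large p j₀ hk
      have h1 : nOf A p k ≤ TT p k := by
        have h2 := hnOf2 A p k
        have h3 := strictMono_ge_id (TT_strict p) k
        omega
      have h4 : nOf A p k + 1 ≤ p.1.e (jjf p k) := by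
        have := jjf_spec p k
        omega
      have h5 : J.e (nOf A p k + 1) ≤ J.e (p.1.e (jjf p k)) := J.mono.monotone h4
      have h6 : J.e (p.1.e (jjf p k)) ≤ HH p (jjf p k) := hj₀ (jjf p k) hjj
      rw [TT_succ]
      omega
    -- the characterization applied to phi y
    have hz := hJAchar A hA (phi y) ⟨⟨y, hyA, rfl⟩, phi_mem_PSone y⟩
    rw [Filter.eventually_atTop] at hz
    obtain ⟨Nz, hNz⟩ := hz
    show phi y ∈ WB (TT p) q
    rw [WB, Set.mem_setOf_eq]
    rw [sqb, Filter.eventually_atTop] at hq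
    obtain ⟨Mq, hMq⟩ := hq
    rw [Filter.eventually_atTop]
    refine ⟨max Mq (max Nz (p.1.e j₀)), fun m hm => ?_⟩
    obtain ⟨k, hk1, hk2, hk3⟩ := hMq m (by omega)
    refine ⟨k, hk1, hk2, ?_⟩
    have hkm : m ≤ k := le_trans (IntPart.le_e q.1 m) hk1
    have hkj₀ : p.1.e j₀ ≤ k := by omega
    -- decode the matched code
    set n := nOf A p k with hn
    set a := J.e n with ha
    set b := J.e (n+1) with hb
    set l := (List.range (b - a)).map (fun i => x (a + i)) with hl
    have hcode : q.2 k = Nat.pair a (Nat.pair b (Encodable.encode l)) := by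
      rw [← hk3, hR2]
    obtain ⟨hda, hdb, hdl⟩ := code_decomp a b l
    rw [← hcode] at hda hdb hdl
    have hvalid : ValidAt (TT p) k (q.2 k) := by
      refine ⟨?_, ?_, ?_, ?_, ?_⟩
      · rw [hda]; exact (hnOf1 A p k).2
      · rw [hda, hdb]; exact J.mono (show n < n + 1 by omega)
      · rw [hdb]
        exact le_of_lt (hwin k hkj₀)
      · rw [hda, hdb, hdl, hl]
        rw [List.length_map, List.length_range]
      · rw [hdl, hl]
        intro v hv
        rw [List.mem_map] at hv
        obtain ⟨i, -, rfl⟩ := hv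
        exact hJAPS A _
    refine ⟨hvalid, ?_⟩
    -- disagreement inside the coded block
    have hnNz : Nz ≤ n := by
      have h1 := (hnOf1 A p k).1
      omega
    obtain ⟨i, hi1, hi2, hine⟩ := hNz n hnNz
    have hai : a ≤ i := hi1
    have hib : i < b := hi2
    refine ⟨i - a, ?_, ?_⟩
    · rw [hda, hdb]
      omega
    · rw [hda, hdl, hl]
      have h1 : a + (i - a) = i := by omega
      rw [h1]
      rw [getD_range_map _ _ _ (by omega), h1]
      exact hine

end RW
namespace RW

lemma isMeagre_singleton (y₀ : XX) : IsMeagre ({y₀} : Set XX) := by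
  apply isMeagre_of_cover (fun _ => {y₀})
  · intro _
    apply isNowhereDense_of_escape
    intro L s
    refine ⟨L + 1, Function.update s L (y₀ L + 1), by omega,
      fun i hi => Function.update_of_ne (by omega) _ _, ?_⟩
    apply Set.eq_empty_of_forall_notMem
    rintro y ⟨hy1, hy2⟩
    rw [Set.mem_singleton_iff] at hy2
    subst hy2
    have := hy1 L (by omega)
    rw [Function.update_self] at this
    omega
  · exact fun y hy => Set.mem_iUnion.2 ⟨0, hy⟩

lemma IsMeagre.union' {s t : Set XX} (hs : IsMeagre s) (ht : IsMeagre t) :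
    IsMeagre (s ∪ t) := by
  rw [IsMeagre, Set.compl_union]
  exact Filter.inter_mem hs ht

lemma isMeagre_sUnion_finite {S : Set (Set XX)} (hfin : S.Finite) (hS : ∀ A ∈ S, IsMeagre A) :
    IsMeagre (⋃₀ S) := by
  have key := Set.Finite.induction_on
    (motive := fun S _ => (∀ A ∈ S, IsMeagre A) → IsMeagre (⋃₀ S)) S hfin
    (fun _ => by rw [Set.sUnion_empty]; rw [IsMeagre, Set.compl_empty]; exact Filter.univ_mem)
    (by
      intro a S ha hSfin ih hmem
      rw [Set.sUnion_insert]
      exact IsMeagre.union' (hmem a (Set.mem_insert _ _))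
        (ih (fun A hA => hmem A (Set.mem_insert_of_mem _ hA))))
  exact key hS

lemma aleph0_le_of_infinite {S : Set (Set XX)} (h : ¬ S.Finite) : Cardinal.aleph0 ≤ #↥S :=
  Cardinal.infinite_iff.1 (Set.infinite_coe_iff.2 h)

lemma aleph0_le_of_infinite' {S : Set (IntPart × XX)} (h : ¬ S.Finite) :
    Cardinal.aleph0 ≤ #↥S :=
  Cardinal.infinite_iff.1 (Set.infinite_coe_iff.2 h)

/-- cardinality of set products -/
lemma mk_set_prod {α β : Type} (A : Set α) (B : Set β) : #↥(A ×ˢ B) = #↥A * #↥B := by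
  rw [Cardinal.mk_congr (Equiv.Set.prod A B)]
  exact (Cardinal.mk_prod _ _).trans (by simp)

end RW

section Main

open RW

/-- the defining set of bnum Romega -/
private lemma Sb_nonempty :
    {c | ∃ F : Set (ℕ → ℕ), c = #↥F ∧ ∀ y : IntPart × (ℕ → ℕ), ∃ x ∈ F, ¬ sqb y.1 x y.2}.Nonempty := by
  refine ⟨#↥(Set.univ : Set (ℕ → ℕ)), Set.univ, rfl, ?_⟩
  intro y
  refine ⟨fun k => y.2 k + 1, Set.mem_univ _, ?_⟩
  intro hs
  obtain ⟨n, k, -, -, hk⟩ := hs.exists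
  simp only at hk
  omega

private lemma Sd_nonempty :
    {c | ∃ D : Set (IntPart × (ℕ → ℕ)), c = #↥D ∧ ∀ x : ℕ → ℕ, ∃ y ∈ D, sqb y.1 x y.2}.Nonempty := by
  refine ⟨_, Set.univ, rfl, ?_⟩
  intro f
  refine ⟨(⟨id, rfl, strictMono_id⟩, f), Set.mem_univ _, ?_⟩
  apply Filter.Eventually.of_forall
  intro n
  exact ⟨n, le_refl n, Nat.lt_succ_self n, rfl⟩

private lemma Sadd_nonempty :
    {c | ∃ F : Set (Set (ℕ → ℕ)), F ⊆ MIdeal ∧ c = #↥F ∧ ⋃₀ F ∉ MIdeal}.Nonempty := by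
  refine ⟨_, (fun y : ℕ → ℕ => ({y} : Set (ℕ → ℕ))) '' Set.univ, ?_, rfl, ?_⟩
  · rintro A ⟨y, -, rfl⟩
    exact isMeagre_singleton y
  · intro hmem
    apply not_isMeagre_univ
    have : ⋃₀ ((fun y : ℕ → ℕ => ({y} : Set (ℕ → ℕ))) '' Set.univ) = Set.univ := by
      ext y
      simp only [Set.mem_sUnion, Set.mem_univ, iff_true]
      exact ⟨{y}, ⟨y, Set.mem_univ _, rfl⟩, rfl⟩
    rwa [this] at hmem
    
private lemma Scof_nonempty :
    {c | ∃ F : Set (Set (ℕ → ℕ)), F ⊆ MIdeal ∧ c = #↥F ∧ ∀ A ∈ MIdeal, ∃ B ∈ F, A ⊆ B}.Nonempty :=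
  ⟨_, MIdeal, le_refl _, rfl, fun A hA => ⟨A, hA, subset_rfl⟩⟩

end Main
section MainProof

open RW

private lemma add_le_b : addIdeal MIdeal ≤ bnum Romega := by
  classical
  obtain ⟨N1, N2, JX, hN1, hN2, hmain⟩ := directionA_main
  apply le_csInf Sb_nonempty
  rintro c ⟨F, rfl, hunb⟩
  by_cases h1 : ⋃₀ ((fun f => N1 f) '' F) ∈ MIdeal
  · by_cases h2 : ⋃₀ ((fun f => N2 (⋃₀ ((fun f => N1 f) '' F)) f) '' F) ∈ MIdeal
    · exfalso
      obtain ⟨f, hfF, hno⟩ := hunb (JX (⋃₀ ((fun f => N1 f) '' F))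
        (⋃₀ ((fun f => N2 (⋃₀ ((fun f => N1 f) '' F)) f) '' F)))
      apply hno
      exact hmain _ _ h1 h2 f
        (Set.subset_sUnion_of_mem ⟨f, hfF, rfl⟩)
        (Set.subset_sUnion_of_mem ⟨f, hfF, rfl⟩)
    · have hmem : #↥((fun f => N2 (⋃₀ ((fun f => N1 f) '' F)) f) '' F) ∈
          {c | ∃ G : Set (Set (ℕ → ℕ)), G ⊆ MIdeal ∧ c = #↥G ∧ ⋃₀ G ∉ MIdeal} :=
        ⟨(fun f => N2 (⋃₀ ((fun f => N1 f) '' F)) f) '' F,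
          by rintro A ⟨f, -, rfl⟩; exact hN2 _ f, rfl, h2⟩
      exact le_trans (csInf_le' hmem) (Cardinal.mk_image_le (f := _) (s := F))
  · have hmem : #↥((fun f => N1 f) '' F) ∈
        {c | ∃ G : Set (Set (ℕ → ℕ)), G ⊆ MIdeal ∧ c = #↥G ∧ ⋃₀ G ∉ MIdeal} :=
      ⟨(fun f => N1 f) '' F, by rintro A ⟨f, -, rfl⟩; exact hN1 f, rfl, h1⟩
    exact le_trans (csInf_le' hmem) (Cardinal.mk_image_le (f := _) (s := F))

private lemma b_le_add : bnum Romega ≤ addIdeal MIdeal := by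
  classical
  obtain ⟨R1, R2, W, hWm, hmain⟩ := directionB_main
  apply le_csInf Sadd_nonempty
  rintro c ⟨F, hFM, rfl, hUn⟩
  by_cases h1 : ∀ y : IntPart × (ℕ → ℕ), ∃ r ∈ (fun A => R1 A) '' F, ¬ sqb y.1 r y.2
  · have hmem : #↥((fun A => R1 A) '' F) ∈
        {c | ∃ G : Set (ℕ → ℕ), c = #↥G ∧ ∀ y : IntPart × (ℕ → ℕ), ∃ x ∈ G, ¬ sqb y.1 x y.2} :=
      ⟨(fun A => R1 A) '' F, rfl, h1⟩
    exact le_trans (csInf_le' hmem) (Cardinal.mk_image_le (f := _) (s := F))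
  · push_neg at h1
    obtain ⟨p₀, hp₀⟩ := h1
    by_cases h2 : ∀ y : IntPart × (ℕ → ℕ), ∃ r ∈ (fun A => R2 A p₀) '' F, ¬ sqb y.1 r y.2
    · have hmem : #↥((fun A => R2 A p₀) '' F) ∈
          {c | ∃ G : Set (ℕ → ℕ), c = #↥G ∧ ∀ y : IntPart × (ℕ → ℕ), ∃ x ∈ G, ¬ sqb y.1 x y.2} :=
        ⟨(fun A => R2 A p₀) '' F, rfl, h2⟩
      exact le_trans (csInf_le' hmem) (Cardinal.mk_image_le (f := _) (s := F))
    · push_neg at h2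
      obtain ⟨q₀, hq₀⟩ := h2
      exfalso
      apply hUn
      show IsMeagre (⋃₀ F)
      refine IsMeagre.mono ?_ (hWm p₀ q₀)
      apply Set.sUnion_subset
      intro A hAF
      exact hmain A (hFM hAF) p₀ (hp₀ _ ⟨A, hAF, rfl⟩) q₀ (hq₀ _ ⟨A, hAF, rfl⟩)

private lemma d_le_cof : dnum Romega ≤ cofIdeal MIdeal := by
  classical
  obtain ⟨N1, N2, JX, hN1, hN2, hmain⟩ := directionA_main
  apply le_csInf Scof_nonempty
  rintro c ⟨Bf, hBfM, rfl, hcof⟩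
  have hinf : ¬ Bf.Finite := by
    intro hfin
    apply not_isMeagre_univ
    have hU : IsMeagre (⋃₀ Bf) := isMeagre_sUnion_finite hfin (fun A hA => hBfM hA)
    have huniv : (Set.univ : Set (ℕ → ℕ)) ⊆ ⋃₀ Bf := by
      intro y _
      obtain ⟨B, hB, hyB⟩ := hcof {y} (isMeagre_singleton y)
      exact ⟨B, hB, hyB rfl⟩
    exact IsMeagre.mono huniv hU
  refine le_trans (csInf_le'
    (⟨(fun BB : Set (ℕ → ℕ) × Set (ℕ → ℕ) => JX BB.1 BB.2) '' (Bf ×ˢ Bf), rfl, ?_⟩ :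
      _ ∈ {c | ∃ D : Set (IntPart × (ℕ → ℕ)), c = #↥D ∧ ∀ x : ℕ → ℕ, ∃ y ∈ D, sqb y.1 x y.2}))
    ?_
  · intro f
    obtain ⟨B₁, hB₁, hs₁⟩ := hcof (N1 f) (hN1 f)
    obtain ⟨B₂, hB₂, hs₂⟩ := hcof (N2 B₁ f) (hN2 B₁ f)
    exact ⟨JX B₁ B₂, ⟨(B₁, B₂), ⟨hB₁, hB₂⟩, rfl⟩,
      hmain B₁ B₂ (hBfM hB₁) (hBfM hB₂) f hs₁ hs₂⟩
  · calc #↥((fun BB : Set (ℕ → ℕ) × Set (ℕ → ℕ) => JX BB.1 BB.2) '' (Bf ×ˢ Bf))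
        ≤ #↥(Bf ×ˢ Bf) := Cardinal.mk_image_le
      _ = #↥Bf * #↥Bf := mk_set_prod _ _
      _ = #↥Bf := Cardinal.mul_eq_self (aleph0_le_of_infinite hinf)

private lemma cof_le_d : cofIdeal MIdeal ≤ dnum Romega := by
  classical
  obtain ⟨R1, R2, W, hWm, hmain⟩ := directionB_main
  apply le_csInf Sd_nonempty
  rintro c ⟨D, rfl, hdom⟩
  have hinf : ¬ D.Finite := by
    intro hfin
    obtain ⟨y, hyD, hy⟩ := hdom (fun k => (hfin.toFinset.sup (fun y => y.2 k)) + 1)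
    obtain ⟨n, k, -, -, hk⟩ := hy.exists
    have hle : y.2 k ≤ hfin.toFinset.sup (fun y => y.2 k) :=
      Finset.le_sup (f := fun y : IntPart × (ℕ → ℕ) => y.2 k)
        ((Set.Finite.mem_toFinset hfin).mpr hyD)
    simp only at hk
    omega
  refine le_trans (csInf_le'
    (⟨(fun pq : (IntPart × (ℕ → ℕ)) × (IntPart × (ℕ → ℕ)) => W pq.1 pq.2) '' (D ×ˢ D),
      ?_, rfl, ?_⟩ :
      _ ∈ {c | ∃ F : Set (Set (ℕ → ℕ)), F ⊆ MIdeal ∧ c = #↥F ∧ ∀ A ∈ MIdeal, ∃ B ∈ F, A ⊆ B}))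
    ?_
  · rintro A ⟨pq, -, rfl⟩
    exact hWm pq.1 pq.2
  · intro A hAM
    obtain ⟨p, hpD, hp⟩ := hdom (R1 A)
    obtain ⟨q, hqD, hq⟩ := hdom (R2 A p)
    exact ⟨W p q, ⟨(p, q), ⟨hpD, hqD⟩, rfl⟩, hmain A hAM p hp q hq⟩
  · calc #↥((fun pq : (IntPart × (ℕ → ℕ)) × (IntPart × (ℕ → ℕ)) => W pq.1 pq.2) '' (D ×ˢ D))
        ≤ #↥(D ×ˢ D) := Cardinal.mk_image_le
      _ = #↥D * #↥D := mk_set_prod _ _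
      _ = #↥D := Cardinal.mul_eq_self (aleph0_le_of_infinite' hinf)

end MainProof

/-- `𝔟(R_ω) = add(M)` and `𝔡(R_ω) = cof(M)`. -/
theorem stmt11 : bnum Romega = addIdeal MIdeal ∧ dnum Romega = cofIdeal MIdeal :=
  ⟨le_antisymm b_le_add add_le_b, le_antisymm d_le_cof cof_le_d⟩
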